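/- arXiv:2603.24706 — 7 statements merged into one kernel-verified Lean document; each statement's English description precedes it below -/
import Mathlib

section
/- Let X be a set and let 𝒜, ℬ, 𝒞, 𝒟 be four families of subsets of X. Suppose that X is (𝒜,ℬ)-thick, that every A ∈ 𝒜 is (𝒞,𝒟)-thick, and that whenever two sets C, C′ ∈ 𝒞 have nonempty intersection, the intersection C ∩ C′ contains some member of ℬ ∪ 𝒟 as a subset. Then X is (𝒞, ℬ ∪ 𝒟)-thick. -/
/-- A subset `E ⊆ X` is `(𝒜,ℬ)`-thick if any two points of `E` are joined by a finite
chain of members of `𝒜`, consecutive intersections containing a member of `ℬ`. -/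
def IsThick {X : Type*} (𝒜 ℬ : Set (Set X)) (E : Set X) : Prop :=
  ∀ x ∈ E, ∀ y ∈ E, ∃ (n : ℕ) (A : Fin (n + 1) → Set X),
    (∀ i, A i ∈ 𝒜) ∧ x ∈ A 0 ∧ y ∈ A (Fin.last n) ∧
    ∀ i : Fin n, ∃ B ∈ ℬ, B ⊆ A i.castSucc ∩ A i.succ

/-- ℕ-indexed version of a thick chain joining `x` and `y`. -/
def NChain {X : Type*} (𝒞 ℰ : Set (Set X)) (x y : X) : Prop :=
  ∃ n : ℕ, ∃ C : ℕ → Set X, (∀ i ≤ n, C i ∈ 𝒞) ∧ x ∈ C 0 ∧ y ∈ C n ∧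
    ∀ i < n, ∃ B ∈ ℰ, B ⊆ C i ∩ C (i + 1)

lemma nchain_of_fin {X : Type*} {𝒞 ℰ : Set (Set X)} {x y : X}
    (n : ℕ) (A : Fin (n + 1) → Set X) (hA : ∀ i, A i ∈ 𝒞)
    (hx : x ∈ A 0) (hy : y ∈ A (Fin.last n))
    (hc : ∀ i : Fin n, ∃ B ∈ ℰ, B ⊆ A i.castSucc ∩ A i.succ) :
    NChain 𝒞 ℰ x y := by
  refine ⟨n, fun i => A ⟨min i n, by omega⟩, fun i _ => hA _, ?_, ?_, ?_⟩
  · simpa using hx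
  · simpa [Fin.last] using hy
  · intro i hi
    obtain ⟨B, hB, hsub⟩ := hc ⟨i, hi⟩
    refine ⟨B, hB, ?_⟩
    have e1 : (⟨min i n, by omega⟩ : Fin (n+1)) = (⟨i, hi⟩ : Fin n).castSucc := by
      ext; simp [Fin.castSucc]; omega
    have e2 : (⟨min (i+1) n, by omega⟩ : Fin (n+1)) = (⟨i, hi⟩ : Fin n).succ := by
      ext; simp [Fin.succ]; omega
    simp only [e1, e2]; exact hsub

lemma fin_of_nchain {X : Type*} {𝒞 ℰ : Set (Set X)} {x y : X}
    (h : NChain 𝒞 ℰ x y) :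
    ∃ (n : ℕ) (A : Fin (n + 1) → Set X),
    (∀ i, A i ∈ 𝒞) ∧ x ∈ A 0 ∧ y ∈ A (Fin.last n) ∧
    ∀ i : Fin n, ∃ B ∈ ℰ, B ⊆ A i.castSucc ∩ A i.succ := by
  obtain ⟨n, C, hC, hx, hy, hc⟩ := h
  refine ⟨n, fun i => C i, fun i => hC i (by omega), by simpa using hx,
    by simpa [Fin.last] using hy, ?_⟩
  intro i
  obtain ⟨B, hB, hsub⟩ := hc i i.isLt
  exact ⟨B, hB, by simpa [Fin.castSucc, Fin.succ] using hsub⟩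

lemma nchain_mono {X : Type*} {𝒞 ℰ ℰ' : Set (Set X)} {x y : X}
    (hE : ℰ ⊆ ℰ') (h : NChain 𝒞 ℰ x y) : NChain 𝒞 ℰ' x y := by
  obtain ⟨n, C, hC, hx, hy, hc⟩ := h
  refine ⟨n, C, hC, hx, hy, fun i hi => ?_⟩
  obtain ⟨B, hB, hsub⟩ := hc i hi
  exact ⟨B, hE hB, hsub⟩

lemma nchain_glue {X : Type*} {𝒞 ℰ : Set (Set X)} {x y y' z : X}
    (hglue : ∀ C ∈ 𝒞, ∀ C' ∈ 𝒞, y ∈ C → y' ∈ C' → ∃ B ∈ ℰ, B ⊆ C ∩ C')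
    (h1 : NChain 𝒞 ℰ x y) (h2 : NChain 𝒞 ℰ y' z) : NChain 𝒞 ℰ x z := by
  obtain ⟨n, C, hC, hx, hy, hc⟩ := h1
  obtain ⟨m, D, hD, hy', hz, hd⟩ := h2
  refine ⟨n + 1 + m, fun i => if i ≤ n then C i else D (i - (n + 1)), ?_, ?_, ?_, ?_⟩
  · intro i hi
    by_cases h : i ≤ n
    · simp [h]; exact hC i h
    · simp [h]; exact hD _ (by omega)
  · simpa using hx
  · have h : ¬ (n + 1 + m ≤ n) := by omega
    simp only [h, if_false]
    have : n + 1 + m - (n + 1) = m := by omega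
    rw [this]; exact hz
  · intro i hi
    rcases lt_trichotomy i n with h | h | h
    · have h1' : i ≤ n := by omega
      have h2' : i + 1 ≤ n := by omega
      simp only [h1', h2', if_true]
      exact hc i h
    · subst h
      have h2' : ¬ (i + 1 ≤ i) := by omega
      simp only [le_refl, if_true, h2', if_false]
      have : i + 1 - (i + 1) = 0 := by omega
      rw [this]
      exact hglue _ (hC i le_rfl) _ (hD 0 (by omega)) hy hy'
    · have h1' : ¬ (i ≤ n) := by omega
      have h2' : ¬ (i + 1 ≤ n) := by omega
      simp only [h1', h2', if_false]
      have e : i + 1 - (n + 1) = (i - (n + 1)) + 1 := by omega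
      rw [e]
      exact hd _ (by omega)

/-- Transitivity of thickness: if `X` is `(𝒜,ℬ)`-thick, every `A ∈ 𝒜` is `(𝒞,𝒟)`-thick,
and intersecting members of `𝒞` always contain a member of `ℬ ∪ 𝒟` in their intersection,
then `X` is `(𝒞, ℬ ∪ 𝒟)`-thick. -/
theorem thickness_transitivity {X : Type*} (𝒜 ℬ 𝒞 𝒟 : Set (Set X))
    (h1 : IsThick 𝒜 ℬ (Set.univ : Set X))
    (h2 : ∀ A ∈ 𝒜, IsThick 𝒞 𝒟 A)
    (h3 : ∀ C ∈ 𝒞, ∀ C' ∈ 𝒞, (C ∩ C').Nonempty → ∃ B ∈ ℬ ∪ 𝒟, B ⊆ C ∩ C') :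
    IsThick 𝒞 (ℬ ∪ 𝒟) (Set.univ : Set X) := by
  -- glue lemma specialized: chains sharing an endpoint
  have glue : ∀ {x y z : X}, NChain 𝒞 (ℬ ∪ 𝒟) x y → NChain 𝒞 (ℬ ∪ 𝒟) y z →
      NChain 𝒞 (ℬ ∪ 𝒟) x z := by
    intro x y z hxy hyz
    refine nchain_glue (fun C hC C' hC' hy hy' => h3 C hC C' hC' ⟨y, hy, hy'⟩) hxy hyz
  -- glue with empty connector
  have glue0 : ∅ ∈ ℬ ∪ 𝒟 → ∀ {x y y' z : X}, NChain 𝒞 (ℬ ∪ 𝒟) x y →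
      NChain 𝒞 (ℬ ∪ 𝒟) y' z → NChain 𝒞 (ℬ ∪ 𝒟) x z := by
    intro h0 x y y' z hxy hyz
    exact nchain_glue (fun C _ C' _ _ _ => ⟨∅, h0, Set.empty_subset _⟩) hxy hyz
  -- chain within a member of 𝒜
  have inA : ∀ A ∈ 𝒜, ∀ p ∈ A, ∀ q ∈ A, NChain 𝒞 (ℬ ∪ 𝒟) p q := by
    intro A hA p hp q hq
    obtain ⟨n, Cf, hCf, hx, hy, hc⟩ := h2 A hA p hp q hq
    exact nchain_mono (Set.subset_union_right) (nchain_of_fin n Cf hCf hx hy hc)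
  intro x _ y _
  obtain ⟨n, Af, hAf, hx, hy, hcf⟩ := h1 x (Set.mem_univ x) y (Set.mem_univ y)
  obtain ⟨m, A, hA, hx', hy', hc⟩ := nchain_of_fin n Af hAf hx hy hcf
  -- invariant along the 𝒜-chain
  have key : ∀ i ≤ m, ∃ p, NChain 𝒞 (ℬ ∪ 𝒟) x p ∧ (p ∈ A i ∨ ∅ ∈ ℬ ∪ 𝒟) := by
    intro i
    induction i with
    | zero => exact fun _ => ⟨x, inA (A 0) (hA 0 (by omega)) x hx' x hx', Or.inl hx'⟩
    | succ i ih =>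
      intro hi
      obtain ⟨p, hchain, hp⟩ := ih (by omega)
      obtain ⟨B, hB, hsub⟩ := hc i (by omega)
      rcases Set.eq_empty_or_nonempty B with hBe | ⟨b, hb⟩
      · exact ⟨p, hchain, Or.inr (Or.inl (hBe ▸ hB))⟩
      · rcases hp with hpA | h0
        · have hbA : b ∈ A i ∩ A (i + 1) := hsub hb
          refine ⟨b, glue hchain (inA (A i) (hA i (by omega)) p hpA b hbA.1), Or.inl hbA.2⟩
        · exact ⟨p, hchain, Or.inr h0⟩
  obtain ⟨p, hchain, hp⟩ := key m le_rfl
  have final : NChain 𝒞 (ℬ ∪ 𝒟) x y := by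
    rcases hp with hpA | h0
    · exact glue hchain (inA (A m) (hA m le_rfl) p hpA y hy')
    · exact glue0 h0 hchain (inA (A m) (hA m le_rfl) y hy' y hy')
  exact fin_of_nchain final
end

section
/- Let G be a group generated by a subset S ⊆ G, and let H ≤ G be a subgroup. Set T := S ∪ S⁻¹ ∪ {1}, let 𝒜 := { gHT : g ∈ G } (where gHT = { ght : h ∈ H, t ∈ T }, the 1-neighborhood of the coset gH in the word metric associated to S), and let ℬ := { g(H ∩ sHs⁻¹) : g ∈ G, s ∈ S } be the family of left cosets of the subgroups Kₛ = H ∩ sHs⁻¹ for s ∈ S. Then G is (𝒜,ℬ)-thick: for all x, y ∈ G there exist A₁, …, Aₙ ∈ 𝒜 with x ∈ A₁, y ∈ Aₙ, and for each 1 ≤ i ≤ n−1 the intersection Aᵢ ∩ Aᵢ₊₁ contains some member of ℬ as a subset. -/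
namespace ThickAux

variable {G : Type*} [Group G] (S : Set G) (H : Subgroup G)

/-- The 1-neighbourhood `gHT` of the coset `gH`. -/
def N (g : G) : Set G := {x : G | ∃ h ∈ H, ∃ t ∈ S ∪ S⁻¹ ∪ {(1 : G)}, x = g * h * t}

def Afam : Set (Set G) := {A : Set G | ∃ g : G, A = N S H g}

def Bfam : Set (Set G) :=
  {B : Set G | ∃ g : G, ∃ s ∈ S, B = {x : G | ∃ k : G, x = g * k ∧ k ∈ H ∧ s⁻¹ * k * s ∈ H}}

lemma mem_N_self (g : G) : g ∈ N S H g :=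
  ⟨1, H.one_mem, 1, Or.inr rfl, by group⟩

/-- Chains whose first set is `N x` and last set is `N y`. -/
def P (x y : G) : Prop :=
  ∃ (n : ℕ) (A : Fin (n + 1) → Set G),
    (∀ i, A i ∈ Afam S H) ∧ A 0 = N S H x ∧ A (Fin.last n) = N S H y ∧
    ∀ i : Fin n, ∃ B ∈ Bfam S H, B ⊆ A i.castSucc ∩ A i.succ

lemma P_refl (x : G) : P S H x x :=
  ⟨0, fun _ => N S H x, fun _ => ⟨x, rfl⟩, rfl, rfl, fun i => i.elim0⟩

/-- The key geometric step: for `t ∈ S ∪ S⁻¹`, the intersection `N z ∩ N (z*t)`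
contains a coset of `H ∩ sHs⁻¹`. -/
lemma step (z t : G) (ht : t ∈ S ∨ t⁻¹ ∈ S) :
    ∃ B ∈ Bfam S H, B ⊆ N S H z ∩ N S H (z * t) := by
  rcases ht with ht | ht
  · refine ⟨{x : G | ∃ k : G, x = z * k ∧ k ∈ H ∧ t⁻¹ * k * t ∈ H},
      ⟨z, t, ht, rfl⟩, ?_⟩
    rintro x ⟨k, rfl, hk, hk'⟩
    constructor
    · exact ⟨k, hk, 1, Or.inr rfl, by group⟩
    · exact ⟨t⁻¹ * k * t, hk', t⁻¹, Or.inl (Or.inr (by simpa using ht)), by group⟩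
  · refine ⟨{x : G | ∃ k : G, x = (z * t) * k ∧ k ∈ H ∧ (t⁻¹)⁻¹ * k * t⁻¹ ∈ H},
      ⟨z * t, t⁻¹, ht, rfl⟩, ?_⟩
    rintro x ⟨k, rfl, hk, hk'⟩
    constructor
    · refine ⟨t * k * t⁻¹, by simpa using hk', t, Or.inl (Or.inr (by simpa using ht)), by group⟩
    · exact ⟨k, hk, 1, Or.inr rfl, by group⟩

/-- Appending one step to a chain. -/
lemma P_snoc {x z w : G} (hxz : P S H x z)
    (hB : ∃ B ∈ Bfam S H, B ⊆ N S H z ∩ N S H w) : P S H x w := by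
  obtain ⟨n, A, hA, h0, hlast, hchain⟩ := hxz
  refine ⟨n + 1, Fin.snoc A (N S H w), ?_, ?_, ?_, ?_⟩
  · intro i
    refine Fin.lastCases ?_ ?_ i
    · rw [Fin.snoc_last]; exact ⟨w, rfl⟩
    · intro j; rw [Fin.snoc_castSucc]; exact hA j
  · have : (0 : Fin (n + 2)) = Fin.castSucc 0 := rfl
    rw [this, Fin.snoc_castSucc]; exact h0
  · rw [Fin.snoc_last]
  · intro i
    refine Fin.lastCases ?_ ?_ i
    · rw [Fin.succ_last, Fin.snoc_last, Fin.snoc_castSucc, hlast]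
      exact hB
    · intro j
      have h2 : (j.castSucc).succ = (j.succ).castSucc := (Fin.succ_castSucc j).symm
      rw [h2, Fin.snoc_castSucc, Fin.snoc_castSucc]
      exact hchain j

lemma P_all (hS : Subgroup.closure S = ⊤) (x y : G) : P S H x y := by
  have hy : x⁻¹ * y ∈ (Subgroup.closure S).toSubmonoid := by rw [hS]; trivial
  rw [Subgroup.closure_toSubmonoid] at hy
  obtain ⟨l, hl, hprod⟩ := Submonoid.exists_list_of_mem_closure hy
  have key : ∀ l : List G, (∀ t ∈ l, t ∈ S ∪ S⁻¹) → P S H x (x * l.prod) := by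
    intro l
    induction l using List.reverseRecOn with
    | nil => intro _; simpa using P_refl S H x
    | append_singleton l t ih =>
      intro hmem
      have h1 : x * (l ++ [t]).prod = (x * l.prod) * t := by
        rw [List.prod_append]; simp [mul_assoc]
      rw [h1]
      refine P_snoc S H (ih fun u hu => hmem u (List.mem_append_left _ hu)) ?_
      have ht := hmem t (List.mem_append_right _ (List.mem_singleton_self t))
      exact step S H (x * l.prod) t (by simpa using ht)
  have := key l hl
  rwa [hprod, mul_inv_cancel_left] at this

end ThickAux

/-- Let `G` be a group generated by `S` and `H ≤ G` a subgroup. With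
`T = S ∪ S⁻¹ ∪ {1}`, `𝒜 = { gHT : g ∈ G }` (the `1`-neighbourhoods of left cosets of `H`
in the word metric of `S`) and `ℬ = { g (H ∩ sHs⁻¹) : g ∈ G, s ∈ S }`, the group `G` is
`(𝒜,ℬ)`-thick. -/
theorem thick_family_left_cosets {G : Type*} [Group G] (S : Set G)
    (hS : Subgroup.closure S = ⊤) (H : Subgroup G) :
    IsThick
      {A : Set G | ∃ g : G, A = {x : G | ∃ h ∈ H, ∃ t ∈ S ∪ S⁻¹ ∪ {(1 : G)}, x = g * h * t}}
      {B : Set G | ∃ g : G, ∃ s ∈ S, B = {x : G | ∃ k : G, x = g * k ∧ k ∈ H ∧ s⁻¹ * k * s ∈ H}}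
      (Set.univ : Set G) := by
  intro x _ y _
  obtain ⟨n, A, hA, h0, hlast, hchain⟩ := ThickAux.P_all S H hS x y
  exact ⟨n, A, hA, h0 ▸ ThickAux.mem_N_self S H x, hlast ▸ ThickAux.mem_N_self S H y, hchain⟩
end

section
/- Let G be a group, let A₁, A₂ ≤ G be two subgroups that together generate G, and let B be a subgroup with B ≤ A₁ ∩ A₂ (for example, G = A₁ ∗_B A₂ an amalgamated free product). Let 𝒜 be the family of all left cosets gA₁ and gA₂ for g ∈ G, and let ℬ be the family of all left cosets gB for g ∈ G. Then G is (𝒜,ℬ)-thick. -/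
open Pointwise

def ChainP {X : Type*} (𝒜 ℬ : Set (Set X)) (x y : X) : Prop :=
  ∃ (n : ℕ) (A : Fin (n + 1) → Set X),
    (∀ i, A i ∈ 𝒜) ∧ x ∈ A 0 ∧ y ∈ A (Fin.last n) ∧
    ∀ i : Fin n, ∃ B ∈ ℬ, B ⊆ A i.castSucc ∩ A i.succ

lemma chainP_symm {X : Type*} {𝒜 ℬ : Set (Set X)} {x y : X}
    (h : ChainP 𝒜 ℬ x y) : ChainP 𝒜 ℬ y x := by
  obtain ⟨n, A, hA, hx, hy, hI⟩ := h
  refine ⟨n, fun i => A i.rev, fun i => hA _, ?_, ?_, ?_⟩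
  · simpa [Fin.rev_zero] using hy
  · simpa [Fin.rev_last] using hx
  · intro i
    obtain ⟨Bc, hBc, hsub⟩ := hI i.rev
    refine ⟨Bc, hBc, ?_⟩
    show Bc ⊆ A i.castSucc.rev ∩ A i.succ.rev
    rw [Fin.rev_castSucc, Fin.rev_succ, Set.inter_comm]
    exact hsub

lemma chainP_trans {X : Type*} {𝒜 ℬ : Set (Set X)} {x y z : X}
    (hj : ∀ (w : X) (S₁ S₂ : Set X), S₁ ∈ 𝒜 → S₂ ∈ 𝒜 → w ∈ S₁ → w ∈ S₂ →
      ∃ B ∈ ℬ, B ⊆ S₁ ∩ S₂)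
    (h1 : ChainP 𝒜 ℬ x y) (h2 : ChainP 𝒜 ℬ y z) : ChainP 𝒜 ℬ x z := by
  obtain ⟨n, A, hA, hx, hy, hI⟩ := h1
  obtain ⟨m, C, hC, hy', hz, hJ⟩ := h2
  refine ⟨n + 1 + m, fun i =>
      if h : (i : ℕ) < n + 1 then A ⟨i, h⟩ else C ⟨(i : ℕ) - (n + 1), by omega⟩,
      ?_, ?_, ?_, ?_⟩
  · intro i; dsimp only; split <;> [exact hA _; exact hC _]
  · simp only [Fin.val_zero]
    show x ∈ A 0
    exact hx
  · simp only [Fin.val_last]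
    rw [dif_neg (by omega)]
    have e : (⟨n + 1 + m - (n + 1), by omega⟩ : Fin (m + 1)) = Fin.last m := by
      ext; simp only [Fin.val_last]; omega
    rw [e]
    exact hz
  · intro i
    dsimp only
    simp only [Fin.coe_castSucc, Fin.val_succ]
    rcases lt_trichotomy (i : ℕ) n with hlt | heq | hgt
    · obtain ⟨Bc, hBc, hsub⟩ := hI ⟨i, hlt⟩
      refine ⟨Bc, hBc, ?_⟩
      rw [dif_pos (show (i : ℕ) < n + 1 by omega),
        dif_pos (show (i : ℕ) + 1 < n + 1 by omega)]
      exact hsub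
    · rw [dif_pos (show (i : ℕ) < n + 1 by omega),
        dif_neg (show ¬ ((i : ℕ) + 1 < n + 1) by omega)]
      have e1 : (⟨(i : ℕ), by omega⟩ : Fin (n + 1)) = Fin.last n := by
        ext; simp [heq, Fin.last]
      have e2 : (⟨(i : ℕ) + 1 - (n + 1), by omega⟩ : Fin (m + 1)) = 0 := by
        ext; simp [heq]
      rw [e1, e2]
      exact hj y _ _ (hA _) (hC _) hy hy'
    · rw [dif_neg (show ¬ ((i : ℕ) < n + 1) by omega),
        dif_neg (show ¬ ((i : ℕ) + 1 < n + 1) by omega)]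
      have hm : (i : ℕ) - (n + 1) < m := by omega
      obtain ⟨Bc, hBc, hsub⟩ := hJ ⟨(i : ℕ) - (n + 1), hm⟩
      refine ⟨Bc, hBc, ?_⟩
      have e2 : (⟨(i : ℕ) + 1 - (n + 1), by omega⟩ : Fin (m + 1)) =
          (⟨(i : ℕ) - (n + 1), hm⟩ : Fin m).succ := by
        ext; simp [Fin.val_succ]; omega
      rw [e2]
      exact hsub

/-- If `G` is generated by two subgroups `A₁, A₂` and `B ≤ A₁ ∩ A₂`, then `G` is
`(𝒜,ℬ)`-thick where `𝒜` is the family of left cosets of `A₁` and `A₂`, and `ℬ` is the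
family of left cosets of `B`. -/
theorem thick_amalgam {G : Type*} [Group G] (A₁ A₂ B : Subgroup G)
    (hgen : A₁ ⊔ A₂ = ⊤) (hB : B ≤ A₁ ⊓ A₂) :
    IsThick
      {S : Set G | ∃ g : G, S = g • (A₁ : Set G) ∨ S = g • (A₂ : Set G)}
      {S : Set G | ∃ g : G, S = g • (B : Set G)}
      (Set.univ : Set G) := by
  set 𝒜 : Set (Set G) := {S : Set G | ∃ g : G, S = g • (A₁ : Set G) ∨ S = g • (A₂ : Set G)}
  set ℬ : Set (Set G) := {S : Set G | ∃ g : G, S = g • (B : Set G)}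
  have hBsub : ∀ (x : G) (S : Set G), S ∈ 𝒜 → x ∈ S → x • (B : Set G) ⊆ S := by
    rintro x S ⟨g, hg | hg⟩ hxS
    · subst hg
      rintro _ ⟨b, hb, rfl⟩
      exact ⟨g⁻¹ * x * b, mul_mem (Set.mem_smul_set_iff_inv_smul_mem.mp hxS)
        ((hB hb).1), by simp only [smul_eq_mul]; group⟩
    · subst hg
      rintro _ ⟨b, hb, rfl⟩
      exact ⟨g⁻¹ * x * b, mul_mem (Set.mem_smul_set_iff_inv_smul_mem.mp hxS)
        ((hB hb).2), by simp only [smul_eq_mul]; group⟩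
  have hj : ∀ (w : G) (S₁ S₂ : Set G), S₁ ∈ 𝒜 → S₂ ∈ 𝒜 → w ∈ S₁ → w ∈ S₂ →
      ∃ Bc ∈ ℬ, Bc ⊆ S₁ ∩ S₂ := by
    intro w S₁ S₂ h₁ h₂ hw₁ hw₂
    exact ⟨w • (B : Set G), ⟨w, rfl⟩,
      Set.subset_inter (hBsub w S₁ h₁ hw₁) (hBsub w S₂ h₂ hw₂)⟩
  have htrans : ∀ (g x y : G), ChainP 𝒜 ℬ x y → ChainP 𝒜 ℬ (g * x) (g * y) := by
    intro g x y ⟨n, A, hA, hx, hy, hI⟩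
    refine ⟨n, fun i => g • A i, ?_, ?_, ?_, ?_⟩
    · intro i
      obtain ⟨h, hh | hh⟩ := hA i
      · exact ⟨g * h, Or.inl (by dsimp only; rw [hh, smul_smul])⟩
      · exact ⟨g * h, Or.inr (by dsimp only; rw [hh, smul_smul])⟩
    · exact Set.smul_mem_smul_set hx
    · exact Set.smul_mem_smul_set hy
    · intro i
      obtain ⟨Bc, ⟨b, rfl⟩, hsub⟩ := hI i
      refine ⟨g • (b • (B : Set G)), ⟨g * b, by rw [smul_smul]⟩, ?_⟩
      show g • (b • (B : Set G)) ⊆ (g • A i.castSucc) ∩ (g • A i.succ)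
      rw [← Set.smul_set_inter]
      exact Set.smul_set_mono hsub
  have hsingle : ∀ (S : Set G), S ∈ 𝒜 → ∀ x ∈ S, ∀ y ∈ S, ChainP 𝒜 ℬ x y := by
    intro S hS x hx y hy
    exact ⟨0, fun _ => S, fun _ => hS, hx, hy, fun i => i.elim0⟩
  have key : ∀ g : G, ChainP 𝒜 ℬ 1 g := by
    intro g
    have hg : g ∈ Subgroup.closure ((A₁ : Set G) ∪ (A₂ : Set G)) := by
      rw [Subgroup.closure_union, Subgroup.closure_eq, Subgroup.closure_eq, hgen]
      trivial
    induction hg using Subgroup.closure_induction with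
    | mem a ha =>
      rcases ha with ha | ha
      · exact hsingle _ ⟨1, Or.inl (by simp)⟩ 1 (one_mem A₁) a ha
      · exact hsingle _ ⟨1, Or.inr (by simp)⟩ 1 (one_mem A₂) a ha
    | one => exact hsingle _ ⟨1, Or.inl (by simp)⟩ 1 (one_mem A₁) 1 (one_mem A₁)
    | mul a b _ _ iha ihb =>
      have h2 : ChainP 𝒜 ℬ a (a * b) := by
        have := htrans a 1 b ihb; simpa using this
      exact chainP_trans hj iha h2
    | inv a _ iha =>
      have h1 : ChainP 𝒜 ℬ a 1 := chainP_symm iha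
      have := htrans a⁻¹ a 1 h1
      simpa using this
  intro x _ y _
  have h1 : ChainP 𝒜 ℬ 1 (x⁻¹ * y) := key _
  have h2 := htrans x 1 (x⁻¹ * y) h1
  simp only [mul_one, mul_inv_cancel_left] at h2
  exact h2
end

section
/- Let σ : ℕ → ℕ be a subexponential function, let ρ : [0,∞) → [0,∞) be an increasing unbounded function, and let λ ≥ 1, c ≥ 0, N ∈ ℕ be constants. Then there exists Q ≥ 0 with the following property. Let X be a connected simple graph all of whose vertex degrees are at most N, let Z be a set of vertices of X such that |B(p,R) ∩ Z| ≤ σ(R) for every vertex p and every R ∈ ℕ, and let φ be a map from the vertices of the rooted binary tree T₂ to the vertices of X satisfying ρ(d_T(u,v)) ≤ d(φ(u), φ(v)) ≤ λ·d_T(u,v) + c for all vertices u, v of T₂. If d(φ(o), Z) ≥ Q, then there exists an infinite binary word f : ℕ → {0,1} such that, writing p_n for the length-n prefix of f, one has φ(p_n) ∉ Z for every n ∈ ℕ and the distances d(φ(p_n), Z) are unbounded as n ranges over ℕ. -/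
def commonPrefixLen : List Bool → List Bool → ℕ
  | [], _ => 0
  | _ :: _, [] => 0
  | a :: u, b :: v => if a = b then commonPrefixLen u v + 1 else 0

def treeDist (u v : List Bool) : ℕ :=
  u.length + v.length - 2 * commonPrefixLen u v

lemma cpl_le_left : ∀ u v : List Bool, commonPrefixLen u v ≤ u.length
  | [], _ => by simp [commonPrefixLen]
  | _ :: _, [] => by simp [commonPrefixLen]
  | a :: u, b :: v => by
      by_cases h : a = b <;> simp [commonPrefixLen, h]
      exact cpl_le_left u v

lemma take_eq_of_le_cpl : ∀ (u v : List Bool) (k : ℕ), k ≤ commonPrefixLen u v →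
    u.take k = v.take k
  | [], v, k, h => by
      simp [commonPrefixLen] at h; simp [h]
  | _ :: _, [], k, h => by
      simp [commonPrefixLen] at h; simp [h]
  | a :: u, b :: v, k, h => by
      by_cases hab : a = b
      · cases k with
        | zero => simp
        | succ k =>
          simp [commonPrefixLen, hab] at h
          simp [hab, take_eq_of_le_cpl u v k h]
      · simp [commonPrefixLen, hab] at h; simp [h]

lemma cpl_append_left : ∀ (w x y : List Bool), w.length ≤ commonPrefixLen (w ++ x) (w ++ y)
  | [], _, _ => by simp
  | a :: w, x, y => by
      simpa [commonPrefixLen] using cpl_append_left w x y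

lemma cpl_append_self : ∀ (u x : List Bool), commonPrefixLen u (u ++ x) = u.length
  | [], _ => by simp [commonPrefixLen]
  | a :: u, x => by simp [commonPrefixLen, cpl_append_self u x]

lemma treeDist_append (u x : List Bool) : treeDist u (u ++ x) = x.length := by
  simp [treeDist, cpl_append_self, List.length_append]; omega

lemma take_append_len (w x : List Bool) (m : ℕ) :
    (w ++ x).take (w.length + m) = w ++ x.take m := by
  induction w with
  | nil => simp
  | cons a w ih => simpa [Nat.succ_add] using ih

lemma take_ofFn_res (Δ δ : ℕ) (h : δ ≤ Δ) (a : Fin Δ → Bool) :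
    (List.ofFn a).take δ = List.ofFn (fun i : Fin δ => a (Fin.castLE h i)) := by
  apply List.ext_getElem (by simp [h])
  intro i h1 h2
  simp only [List.getElem_take, List.getElem_ofFn]
  congr 1

lemma ball_finite {V : Type} (X : SimpleGraph V) (hconn : X.Connected)
    (hdeg : ∀ v : V, (X.neighborSet v).Finite) (p : V) :
    ∀ R : ℕ, {x : V | X.dist p x ≤ R}.Finite := by
  intro R
  induction R with
  | zero =>
    apply Set.Finite.subset (Set.finite_singleton p)
    intro x hx
    simp only [Set.mem_setOf_eq, Nat.le_zero] at hx
    simp [((hconn.dist_eq_zero_iff (u := p) (v := x)).mp hx).symm]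
  | succ R ih =>
    apply Set.Finite.subset (ih.union (Set.Finite.biUnion ih (fun y _ => hdeg y)))
    intro x hx
    simp only [Set.mem_setOf_eq] at hx
    by_cases h : X.dist p x ≤ R
    · exact Or.inl h
    · right
      obtain ⟨w, hw⟩ := hconn.exists_walk_length_eq_dist x p
      rw [SimpleGraph.dist_comm] at hw
      cases w with
      | nil =>
        exfalso
        simp only [SimpleGraph.Walk.length_nil] at hw
        omega
      | @cons _ y _ hadj w' =>
        refine Set.mem_biUnion (show y ∈ {x : V | X.dist p x ≤ R} from ?_) hadj.symm
        simp only [Set.mem_setOf_eq]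
        have : X.dist y p ≤ w'.length := SimpleGraph.dist_le w'
        simp only [SimpleGraph.Walk.length_cons] at hw
        rw [SimpleGraph.dist_comm]
        omega

lemma count_bad {V : Type} (X : SimpleGraph V) (hconn : X.Connected)
    (hdeg : ∀ v : V, (X.neighborSet v).Finite)
    (Z : Set V) (σ : ℕ → ℕ)
    (hZ : ∀ (p : V) (R : ℕ), ({x ∈ Z | X.dist p x ≤ R}).ncard ≤ σ R)
    (ρ : ℝ → ℝ) (hρ_mono : Monotone ρ)
    (lam c : ℝ)
    (φ : List Bool → V)
    (hφl : ∀ u v, ρ (treeDist u v : ℝ) ≤ (X.dist (φ u) (φ v) : ℝ))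
    (hφu : ∀ u v, (X.dist (φ u) (φ v) : ℝ) ≤ lam * treeDist u v + c)
    (w : List Bool) (δ : ℕ) (D : ℝ) (sD : ℕ) (hsD : 2 * D < ρ sD)
    (Bad : Finset (Fin δ → Bool))
    (hBad : ∀ a ∈ Bad, ∃ z ∈ Z, (X.dist (φ (w ++ List.ofFn a)) z : ℝ) ≤ D) :
    Bad.card ≤ 2 ^ sD * σ (⌈lam * δ + c + D⌉₊) := by
  classical
  have hV : Nonempty V := hconn.nonempty
  set R : ℕ := ⌈lam * δ + c + D⌉₊ with hR
  have hfin : ({x ∈ Z | X.dist (φ w) x ≤ R}).Finite :=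
    (ball_finite X hconn hdeg (φ w) R).subset (fun x hx => hx.2)
  set ZBf : Finset V := hfin.toFinset with hZBf
  have hZBcard : ZBf.card ≤ σ R := by
    rw [hZBf, ← Set.ncard_eq_toFinset_card _ hfin]
    exact hZ (φ w) R
  set ch : (Fin δ → Bool) → V := fun a =>
    if h : ∃ z ∈ Z, (X.dist (φ (w ++ List.ofFn a)) z : ℝ) ≤ D then h.choose
    else Classical.arbitrary V with hch
  have hch_spec : ∀ a ∈ Bad, ch a ∈ Z ∧ (X.dist (φ (w ++ List.ofFn a)) (ch a) : ℝ) ≤ D := by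
    intro a ha
    have h := hBad a ha
    rw [hch]
    simp only [dif_pos h]
    exact ⟨h.choose_spec.1, h.choose_spec.2⟩
  have hmaps : ∀ a ∈ Bad, ch a ∈ ZBf := by
    intro a ha
    obtain ⟨hz, hd⟩ := hch_spec a ha
    rw [hZBf, Set.Finite.mem_toFinset]
    refine ⟨hz, ?_⟩
    have htri : X.dist (φ w) (ch a) ≤ X.dist (φ w) (φ (w ++ List.ofFn a))
        + X.dist (φ (w ++ List.ofFn a)) (ch a) := hconn.dist_triangle
    have h1 : (X.dist (φ w) (φ (w ++ List.ofFn a)) : ℝ) ≤ lam * δ + c := by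
      have := hφu w (w ++ List.ofFn a)
      rwa [treeDist_append, List.length_ofFn] at this
    have : (X.dist (φ w) (ch a) : ℝ) ≤ lam * δ + c + D := by
      have htri' : (X.dist (φ w) (ch a) : ℝ) ≤ (X.dist (φ w) (φ (w ++ List.ofFn a)) : ℝ)
          + (X.dist (φ (w ++ List.ofFn a)) (ch a) : ℝ) := by exact_mod_cast htri
      linarith
    have hle : (X.dist (φ w) (ch a) : ℝ) ≤ (R : ℝ) := le_trans this (Nat.le_ceil _)
    exact_mod_cast hle
  have hfiber : ∀ z ∈ ZBf, (Bad.filter fun a => ch a = z).card ≤ 2 ^ sD := by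
    intro z _
    have : (Bad.filter fun a => ch a = z).card ≤ (Finset.univ : Finset (Fin sD → Bool)).card := by
      apply Finset.card_le_card_of_injOn
        (fun a => fun i : Fin sD => if h : δ - sD + i.1 < δ then a ⟨δ - sD + i.1, h⟩ else false)
        (fun _ _ => Finset.mem_univ _)
      intro a ha b hb hab
      simp only [Finset.mem_coe, Finset.mem_filter] at ha hb
      have hda := (hch_spec a ha.1).2
      have hdb := (hch_spec b hb.1).2
      rw [ha.2] at hda
      rw [hb.2] at hdb
      set A := w ++ List.ofFn a with hA
      set B := w ++ List.ofFn b with hB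
      have htri : X.dist (φ A) (φ B) ≤ X.dist (φ A) z + X.dist z (φ B) := hconn.dist_triangle
      have hzB : X.dist z (φ B) = X.dist (φ B) z := SimpleGraph.dist_comm
      have hAB : (X.dist (φ A) (φ B) : ℝ) ≤ 2 * D := by
        rw [hzB] at htri
        have htri' : (X.dist (φ A) (φ B) : ℝ) ≤ (X.dist (φ A) z : ℝ)
            + (X.dist (φ B) z : ℝ) := by exact_mod_cast htri
        linarith
      have htd : treeDist A B < sD := by
        by_contra hcon
        push_neg at hcon
        have : ρ (sD : ℝ) ≤ ρ (treeDist A B : ℝ) := hρ_mono (by exact_mod_cast hcon)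
        have := le_trans this (hφl A B)
        linarith
      have hlenA : A.length = w.length + δ := by simp [hA]
      have hlenB : B.length = w.length + δ := by simp [hB]
      have hcplw : w.length ≤ commonPrefixLen A B := cpl_append_left w _ _
      have hcplA : commonPrefixLen A B ≤ A.length := cpl_le_left A B
      have htd_eq : treeDist A B = A.length + B.length - 2 * commonPrefixLen A B := rfl
      have hkey : w.length + (δ - sD) ≤ commonPrefixLen A B := by omega
      have htake : A.take (w.length + (δ - sD)) = B.take (w.length + (δ - sD)) :=
        take_eq_of_le_cpl A B _ hkey
      rw [hA, hB, take_append_len, take_append_len] at htake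
      have htake2 : (List.ofFn a).take (δ - sD) = (List.ofFn b).take (δ - sD) :=
        List.append_cancel_left htake
      have hearly : ∀ i : ℕ, i < δ - sD → ∀ (h : i < δ), a ⟨i, h⟩ = b ⟨i, h⟩ := by
        intro i hi h
        have hlen1 : i < ((List.ofFn a).take (δ - sD)).length := by simp; omega
        have h1 := List.getElem_of_eq htake2 hlen1
        simp only [List.getElem_take, List.getElem_ofFn] at h1
        exact h1
      funext i
      rcases lt_or_ge i.1 (δ - sD) with hi | hi
      · exact hearly i.1 hi i.2
      · have hj : i.1 - (δ - sD) < sD := by omega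
        have := congrFun hab ⟨i.1 - (δ - sD), hj⟩
        simp only at this
        rw [dif_pos (by omega : δ - sD + (i.1 - (δ - sD)) < δ),
            dif_pos (by omega : δ - sD + (i.1 - (δ - sD)) < δ)] at this
        have hidx : δ - sD + (i.1 - (δ - sD)) = i.1 := by omega
        have ha' : a ⟨δ - sD + (i.1 - (δ - sD)), by omega⟩ = a i := by congr 1; exact Fin.ext hidx
        have hb' : b ⟨δ - sD + (i.1 - (δ - sD)), by omega⟩ = b i := by congr 1; exact Fin.ext hidx
        rw [ha', hb'] at this
        exact this
    simpa using this
  calc Bad.card ≤ 2 ^ sD * ZBf.card :=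
        Finset.card_le_mul_card_image_of_maps_to hmaps _ hfiber
    _ ≤ 2 ^ sD * σ R := Nat.mul_le_mul_left _ hZBcard

lemma restrict_count (Δ δ : ℕ) (h : δ ≤ Δ)
    (BadBig : Finset (Fin Δ → Bool)) (BadSmall : Finset (Fin δ → Bool))
    (hcompat : ∀ a ∈ BadBig, (fun i : Fin δ => a (Fin.castLE h i)) ∈ BadSmall) :
    BadBig.card ≤ 2 ^ (Δ - δ) * BadSmall.card := by
  classical
  have hfiber : ∀ b ∈ BadSmall,
      (BadBig.filter fun a => (fun i : Fin δ => a (Fin.castLE h i)) = b).card ≤ 2 ^ (Δ - δ) := by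
    intro b _
    have : (BadBig.filter fun a => (fun i : Fin δ => a (Fin.castLE h i)) = b).card
        ≤ (Finset.univ : Finset (Fin (Δ - δ) → Bool)).card := by
      apply Finset.card_le_card_of_injOn
        (fun a => fun j : Fin (Δ - δ) => a ⟨δ + j.1, by omega⟩)
        (fun _ _ => Finset.mem_univ _)
      intro a ha a' ha' hab
      simp only [Finset.mem_coe, Finset.mem_filter] at ha ha'
      funext i
      rcases lt_or_ge i.1 δ with hi | hi
      · have h1 := congrFun ha.2 ⟨i.1, hi⟩
        have h2 := congrFun ha'.2 ⟨i.1, hi⟩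
        have hcast : Fin.castLE h ⟨i.1, hi⟩ = i := by ext; rfl
        rw [hcast] at h1 h2
        rw [h1, h2]
      · have hj : i.1 - δ < Δ - δ := by omega
        have := congrFun hab ⟨i.1 - δ, hj⟩
        simp only at this
        have hidx : δ + (i.1 - δ) = i.1 := by omega
        have ha1 : a ⟨δ + (i.1 - δ), by omega⟩ = a i := by congr 1; exact Fin.ext hidx
        have ha2 : a' ⟨δ + (i.1 - δ), by omega⟩ = a' i := by congr 1; exact Fin.ext hidx
        rw [ha1, ha2] at this
        exact this
    simpa using this
  exact Finset.card_le_mul_card_image_of_maps_to hcompat _ hfiber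

lemma r78_le : ((2:ℝ) ^ (-(7:ℝ)/8)) ≤ 3/4 := by
  have h1 : ((2:ℝ) ^ (-(7:ℝ)/8)) ≤ (2:ℝ) ^ (-(1:ℝ)/2) := by
    apply Real.rpow_le_rpow_of_exponent_le (by norm_num)
    norm_num
  have h2 : (2:ℝ) ^ (-(1:ℝ)/2) = (Real.sqrt 2)⁻¹ := by
    rw [show (-(1:ℝ)/2) = -(1/2) by norm_num, Real.rpow_neg (by norm_num),
      ← Real.sqrt_eq_rpow]
  have hs : Real.sqrt 2 * Real.sqrt 2 = 2 := Real.mul_self_sqrt (by norm_num)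
  have h3 : (4:ℝ)/3 ≤ Real.sqrt 2 := by nlinarith [Real.sqrt_nonneg 2]
  have h4 : (Real.sqrt 2)⁻¹ ≤ 3/4 := by
    rw [inv_le_comm₀ (by nlinarith) (by norm_num)]
    linarith
  linarith [h2 ▸ h1]

lemma geom_bound (K Δ : ℕ) :
    ∑ δ ∈ Finset.Ico K Δ, ((2:ℝ) ^ (-(7:ℝ)/8))^δ ≤ 4 * ((2:ℝ) ^ (-(7:ℝ)/8))^K := by
  set r : ℝ := (2:ℝ) ^ (-(7:ℝ)/8) with hr
  have hrpos : 0 < r := Real.rpow_pos_of_pos (by norm_num) _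
  have hrle : r ≤ 3/4 := r78_le
  have hsum : ∑ δ ∈ Finset.Ico K Δ, r^δ = r^K * ∑ i ∈ Finset.range (Δ - K), r^i := by
    rw [Finset.sum_Ico_eq_sum_range, Finset.mul_sum]
    exact Finset.sum_congr rfl fun i _ => by rw [pow_add]
  have hgeo : ∑ i ∈ Finset.range (Δ - K), r^i ≤ 4 := by
    have hne : r ≠ 1 := by linarith
    rw [geom_sum_eq hne]
    rw [div_le_iff_of_neg (by linarith : r - 1 < 0)]
    have : (0:ℝ) ≤ r ^ (Δ - K) := le_of_lt (pow_pos hrpos _)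
    linarith
  calc ∑ δ ∈ Finset.Ico K Δ, r^δ = r^K * ∑ i ∈ Finset.range (Δ - K), r^i := hsum
    _ ≤ r^K * 4 := mul_le_mul_of_nonneg_left hgeo (le_of_lt (pow_pos hrpos _))
    _ = 4 * r^K := by ring

set_option maxHeartbeats 2000000 in
/-- Let `σ` be subexponential, `ρ` increasing and unbounded, `λ ≥ 1`, `c ≥ 0`, `N ∈ ℕ`.
There exists `Q ≥ 0` such that: in any connected graph of degree `≤ N`, for any vertex set
`Z` of growth `≤ σ` and any coarse embedding `φ` of the rooted binary tree `T₂` with lower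
control `ρ` and upper control `t ↦ λt + c`, if the root is sent at distance `≥ Q` from
`Z`, then some geodesic ray from the root is sent disjointly from `Z` and unboundedly far
from `Z`. -/
theorem ray_in_component (σ : ℕ → ℕ)
    (hσ : ∀ ε : ℝ, 0 < ε → ∃ R₀ : ℕ, ∀ R : ℕ, R₀ ≤ R → (σ R : ℝ) ≤ Real.exp (ε * R))
    (ρ : ℝ → ℝ) (hρ_mono : Monotone ρ) (hρ_nonneg : ∀ t : ℝ, 0 ≤ t → 0 ≤ ρ t)
    (hρ_unbdd : ∀ M : ℝ, ∃ t : ℝ, 0 ≤ t ∧ M < ρ t)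
    (lam c : ℝ) (hlam : 1 ≤ lam) (hc : 0 ≤ c) (N : ℕ) :
    ∃ Q : ℝ, 0 ≤ Q ∧
      ∀ (V : Type) (X : SimpleGraph V), X.Connected →
      (∀ v : V, (X.neighborSet v).Finite ∧ (X.neighborSet v).ncard ≤ N) →
      ∀ Z : Set V, (∀ (p : V) (R : ℕ), ({x ∈ Z | X.dist p x ≤ R}).ncard ≤ σ R) →
      ∀ φ : List Bool → V,
        (∀ u v : List Bool,
          ρ (treeDist u v : ℝ) ≤ (X.dist (φ u) (φ v) : ℝ) ∧
          (X.dist (φ u) (φ v) : ℝ) ≤ lam * (treeDist u v : ℝ) + c) →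
      (∀ z ∈ Z, Q ≤ (X.dist (φ []) z : ℝ)) →
      ∃ f : ℕ → Bool,
        (∀ n : ℕ, φ (List.ofFn fun i : Fin n => f i) ∉ Z) ∧
        (∀ M : ℝ, ∃ n : ℕ, ∀ z ∈ Z, M ≤ (X.dist (φ (List.ofFn fun i : Fin n => f i)) z : ℝ)) := by
  classical
  -- scale s1 for threshold 1
  obtain ⟨t1, ht1nn, ht1⟩ := hρ_unbdd 2
  set s1 : ℕ := ⌈t1⌉₊ with hs1def
  have hs1 : 2 * (1:ℝ) < ρ (s1 : ℝ) := by
    have := hρ_mono (Nat.le_ceil t1)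
    rw [mul_one]
    exact lt_of_lt_of_le ht1 this
  -- subexponential constant
  set ε : ℝ := Real.log 2 / (8 * (lam + c + 2)) with hεdef
  have hεpos : 0 < ε := div_pos (Real.log_pos (by norm_num)) (by linarith)
  obtain ⟨R₀, hR₀⟩ := hσ ε hεpos
  set K₁ : ℕ := max (2 * (s1 + 4)) R₀ with hK₁def
  have hK₁s : 2 * (s1 + 4) ≤ K₁ := le_max_left _ _
  have hK₁R : R₀ ≤ K₁ := le_max_right _ _
  have hK₁8 : 8 ≤ K₁ := le_trans (by omega) hK₁s
  set Q : ℝ := lam * K₁ + c + 1 with hQdef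
  have hK₁cast : (8:ℝ) ≤ (K₁:ℝ) := by exact_mod_cast hK₁8
  have hQ2 : 2 ≤ Q := by nlinarith
  have hQ0 : 0 ≤ Q := by linarith
  -- the subexponential bound
  have hσb : ∀ (δ : ℕ) (D : ℝ), 0 ≤ D → D ≤ δ → R₀ ≤ δ → 1 ≤ δ →
      ((σ (⌈lam * δ + c + D⌉₊) : ℕ) : ℝ) ≤ (2:ℝ) ^ ((δ:ℝ)/8) := by
    intro δ D hD0 hDδ hR₀δ h1δ
    have hδ1 : (1:ℝ) ≤ (δ:ℝ) := by exact_mod_cast h1δ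
    have hδ0 : (0:ℝ) ≤ (δ:ℝ) := by linarith
    have hx0 : (0:ℝ) ≤ lam * δ + c + D := by nlinarith
    have hRge : R₀ ≤ ⌈lam * δ + c + D⌉₊ := by
      refine le_trans hR₀δ ?_
      have h1 : (δ:ℝ) ≤ lam * δ + c + D := by nlinarith
      have h2 : (δ:ℝ) ≤ (⌈lam * δ + c + D⌉₊ : ℝ) := le_trans h1 (Nat.le_ceil _)
      exact_mod_cast h2
    have h1 := hR₀ _ hRge
    have h2 : ((⌈lam * δ + c + D⌉₊ : ℕ) : ℝ) ≤ lam * δ + c + D + 1 :=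
      le_of_lt (Nat.ceil_lt_add_one hx0)
    have h3 : ε * ((⌈lam * δ + c + D⌉₊ : ℕ) : ℝ) ≤ ε * (lam * δ + c + D + 1) :=
      mul_le_mul_of_nonneg_left h2 hεpos.le
    have hineq : lam * δ + c + D + 1 ≤ (lam + c + 2) * δ := by nlinarith
    have h4 : ε * (lam * δ + c + D + 1) ≤ ε * ((lam + c + 2) * δ) :=
      mul_le_mul_of_nonneg_left hineq hεpos.le
    have h5 : ε * ((lam + c + 2) * δ) = Real.log 2 * ((δ:ℝ)/8) := by
      rw [hεdef]
      field_simp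
    have h6 : (σ (⌈lam * δ + c + D⌉₊) : ℝ) ≤ Real.exp (Real.log 2 * ((δ:ℝ)/8)) := by
      refine le_trans h1 (Real.exp_le_exp.mpr ?_)
      rw [← h5]
      exact le_trans h3 h4
    rwa [← Real.rpow_def_of_pos (by norm_num : (0:ℝ) < 2)] at h6
  refine ⟨Q, hQ0, ?_⟩
  intro V X hconn hdeg' Z hZ φ hφ hroot
  have hdeg : ∀ v : V, (X.neighborSet v).Finite := fun v => (hdeg' v).1
  have hφl : ∀ u v, ρ (treeDist u v : ℝ) ≤ (X.dist (φ u) (φ v) : ℝ) := fun u v => (hφ u v).1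
  have hφu : ∀ u v, (X.dist (φ u) (φ v) : ℝ) ≤ lam * treeDist u v + c := fun u v => (hφ u v).2
  -- scales for the targets
  have hsfun : ∀ j : ℕ, ∃ s : ℕ, 2 * (Q + (j:ℝ)) < ρ (s:ℕ) := by
    intro j
    obtain ⟨t, htnn, ht⟩ := hρ_unbdd (2 * (Q + (j:ℝ)))
    exact ⟨⌈t⌉₊, lt_of_lt_of_le ht (hρ_mono (Nat.le_ceil t))⟩
  choose sfun hsfun' using hsfun
  -- gap function
  obtain ⟨Δf, hΔK, hΔs, hΔQ, hΔR⟩ : ∃ Δf : ℕ → ℕ, (∀ i : ℕ, K₁ ≤ Δf i) ∧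
      (∀ i : ℕ, 2 * (sfun i + 2) ≤ Δf i) ∧ (∀ i : ℕ, ⌈Q + (i:ℝ)⌉₊ + 1 ≤ Δf i) ∧
      (∀ i : ℕ, R₀ + 1 ≤ Δf i) :=
    ⟨fun i : ℕ => max (max K₁ (2 * (sfun i + 2))) (max (⌈Q + (i:ℝ)⌉₊ + 1) (R₀ + 1)),
      fun i => le_trans (le_max_left _ _) (le_max_left _ _),
      fun i => le_trans (le_max_right _ _) (le_max_left _ _),
      fun i => le_trans (le_max_left _ _) (le_max_right _ _),
      fun i => le_trans (le_max_right _ _) (le_max_right _ _)⟩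
  obtain ⟨nf, hnf0, hnfsucc⟩ : ∃ nf : ℕ → ℕ, nf 0 = 0 ∧ ∀ j, nf (j+1) = nf j + Δf (j+1) :=
    ⟨fun j => ∑ i ∈ Finset.range j, Δf (i+1), by simp, fun j => Finset.sum_range_succ _ _⟩
  have hnfge : ∀ j, j ≤ nf j := by
    intro j
    induction j with
    | zero => omega
    | succ j ih =>
      have := hΔK (j+1)
      have := hnfsucc j
      omega
  -- the key extension step
  have key : ∀ (j : ℕ) (u : List Bool),
      u.length = nf j →
      (∀ z ∈ Z, Q + (j:ℝ) ≤ (X.dist (φ u) z : ℝ)) →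
      (∀ k, k ≤ u.length → φ (u.take k) ∉ Z) →
      ∃ w : List Bool, u <+: w ∧ w.length = nf (j+1) ∧
        (∀ z ∈ Z, Q + ((j+1:ℕ):ℝ) ≤ (X.dist (φ w) z : ℝ)) ∧
        (∀ k, k ≤ w.length → φ (w.take k) ∉ Z) := by
    intro j u hulen hudist hugood
    set D' : ℝ := Q + (j:ℝ) + 1 with hD'def
    set s' : ℕ := sfun (j+1) with hs'def
    set Δ : ℕ := Δf (j+1) with hΔdef
    have hΔK₁ : K₁ ≤ Δ := hΔK (j+1)
    have hΔs' : 2 * (s' + 2) ≤ Δ := hΔs (j+1)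
    have hΔD' : D' + 1 ≤ (Δ:ℝ) := by
      have h1 := hΔQ (j+1)
      have h2 : D' ≤ (⌈Q + ((j+1:ℕ):ℝ)⌉₊ : ℝ) := by
        have h3 := Nat.le_ceil (Q + ((j+1:ℕ):ℝ))
        rw [hD'def]
        push_cast at h3 ⊢
        linarith
      have h3 : ((⌈Q + ((j+1:ℕ):ℝ)⌉₊ : ℕ) : ℝ) + 1 ≤ (Δ:ℝ) := by exact_mod_cast h1
      linarith
    have hΔR₀ : R₀ + 1 ≤ Δ := hΔR (j+1)
    have hΔ1 : 1 ≤ Δ := le_trans (by omega) hΔK₁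
    have hj0 : (0:ℝ) ≤ (j:ℝ) := Nat.cast_nonneg j
    have hD'0 : 0 ≤ D' := by rw [hD'def]; linarith
    have hs'lt : 2 * D' < ρ (s' : ℝ) := by
      have h := hsfun' (j+1)
      rw [hD'def]
      push_cast at h ⊢
      linarith
    -- bad sets
    set BadE : Finset (Fin Δ → Bool) := Finset.univ.filter
      (fun a => ∃ z ∈ Z, (X.dist (φ (u ++ List.ofFn a)) z : ℝ) ≤ D') with hBadEdef
    set BadI : ℕ → Finset (Fin Δ → Bool) := fun δ => Finset.univ.filter
      (fun a => ∃ z ∈ Z, (X.dist (φ (u ++ (List.ofFn a).take δ)) z : ℝ) ≤ 1) with hBadIdef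
    -- count of the endpoint bad set
    have hBadE_count : (BadE.card : ℝ) ≤ (2:ℝ) ^ ((Δ:ℝ) - 2) := by
      have c1 : BadE.card ≤ 2 ^ s' * σ ⌈lam * Δ + c + D'⌉₊ :=
        count_bad X hconn hdeg Z σ hZ ρ hρ_mono lam c φ hφl hφu u Δ D' s' hs'lt BadE
          (fun a ha => (Finset.mem_filter.mp ha).2)
      have c2 : ((σ (⌈lam * Δ + c + D'⌉₊) : ℕ) : ℝ) ≤ (2:ℝ) ^ ((Δ:ℝ)/8) :=
        hσb Δ D' hD'0 (by linarith) (by omega) hΔ1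
      have c3 : (BadE.card : ℝ) ≤ (2:ℝ) ^ (s' : ℝ) * (2:ℝ) ^ ((Δ:ℝ)/8) := by
        have c4 : (BadE.card : ℝ) ≤ ((2 ^ s' * σ ⌈lam * Δ + c + D'⌉₊ : ℕ) : ℝ) := by
          exact_mod_cast c1
        push_cast at c4
        rw [← Real.rpow_natCast (2:ℝ) s'] at c4
        have h2n : (0:ℝ) ≤ (2:ℝ) ^ (s' : ℝ) := (Real.rpow_pos_of_pos (by norm_num) _).le
        calc (BadE.card : ℝ) ≤ (2:ℝ) ^ (s' : ℝ) * ((σ ⌈lam * Δ + c + D'⌉₊ : ℕ) : ℝ) := c4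
          _ ≤ (2:ℝ) ^ (s' : ℝ) * (2:ℝ) ^ ((Δ:ℝ)/8) := mul_le_mul_of_nonneg_left c2 h2n
      rw [← Real.rpow_add (by norm_num : (0:ℝ) < 2)] at c3
      refine le_trans c3 (Real.rpow_le_rpow_of_exponent_le (by norm_num) ?_)
      have hcast : 2 * ((s':ℝ) + 2) ≤ (Δ:ℝ) := by exact_mod_cast hΔs'
      linarith
    -- count of the intermediate bad sets
    have hBadI_count : ∀ δ : ℕ, K₁ ≤ δ → δ < Δ →
        ((BadI δ).card : ℝ) ≤ (2:ℝ) ^ ((Δ:ℝ) + (s1:ℝ)) * ((2:ℝ) ^ (-(7:ℝ)/8)) ^ δ := by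
      intro δ hδK hδΔ
      have hδle : δ ≤ Δ := le_of_lt hδΔ
      have hδ1 : 1 ≤ δ := le_trans (by omega : 1 ≤ K₁) hδK
      have r1 : (Finset.univ.filter
          (fun b : Fin δ → Bool => ∃ z ∈ Z, (X.dist (φ (u ++ List.ofFn b)) z : ℝ) ≤ 1)).card
          ≤ 2 ^ s1 * σ ⌈lam * δ + c + 1⌉₊ :=
        count_bad X hconn hdeg Z σ hZ ρ hρ_mono lam c φ hφl hφu u δ 1 s1 hs1 _
          (fun b hb => (Finset.mem_filter.mp hb).2)
      have r2 : (BadI δ).card ≤ 2 ^ (Δ - δ) * (Finset.univ.filter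
          (fun b : Fin δ → Bool => ∃ z ∈ Z, (X.dist (φ (u ++ List.ofFn b)) z : ℝ) ≤ 1)).card := by
        apply restrict_count Δ δ hδle
        intro a ha
        rw [hBadIdef] at ha
        simp only [Finset.mem_filter, Finset.mem_univ, true_and] at ha
        simp only [Finset.mem_filter, Finset.mem_univ, true_and]
        rwa [← take_ofFn_res Δ δ hδle a]
      have r3 : ((σ (⌈lam * δ + c + 1⌉₊) : ℕ) : ℝ) ≤ (2:ℝ) ^ ((δ:ℝ)/8) := by
        refine hσb δ 1 (by norm_num) ?_ (le_trans hK₁R hδK) hδ1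
        have : (1:ℝ) ≤ (δ:ℕ) := by exact_mod_cast hδ1
        linarith
      have r4 : ((BadI δ).card : ℝ)
          ≤ (2:ℝ) ^ (((Δ:ℝ) - δ)) * ((2:ℝ) ^ (s1:ℝ) * (2:ℝ) ^ ((δ:ℝ)/8)) := by
        have c4 : ((BadI δ).card : ℝ)
            ≤ ((2 ^ (Δ - δ) * (2 ^ s1 * σ ⌈lam * δ + c + 1⌉₊) : ℕ) : ℝ) := by
          exact_mod_cast le_trans r2 (Nat.mul_le_mul_left _ r1)
        push_cast at c4
        rw [← Real.rpow_natCast (2:ℝ) (Δ - δ), ← Real.rpow_natCast (2:ℝ) s1] at c4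
        rw [Nat.cast_sub hδle] at c4
        refine le_trans c4 ?_
        have h2n : (0:ℝ) ≤ (2:ℝ) ^ ((Δ:ℝ) - δ) := (Real.rpow_pos_of_pos (by norm_num) _).le
        have h2s : (0:ℝ) ≤ (2:ℝ) ^ ((s1:ℕ):ℝ) := (Real.rpow_pos_of_pos (by norm_num) _).le
        exact mul_le_mul_of_nonneg_left
          (mul_le_mul_of_nonneg_left r3 h2s) h2n
      have hrδ : ((2:ℝ) ^ (-(7:ℝ)/8)) ^ δ = (2:ℝ) ^ ((-(7:ℝ)/8) * (δ:ℝ)) := by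
        rw [← Real.rpow_natCast ((2:ℝ) ^ (-(7:ℝ)/8)) δ, ← Real.rpow_mul (by norm_num : (0:ℝ) ≤ 2)]
      rw [hrδ, ← Real.rpow_add (by norm_num : (0:ℝ) < 2)]
      refine le_trans r4 ?_
      rw [← Real.rpow_add (by norm_num : (0:ℝ) < 2), ← Real.rpow_add (by norm_num : (0:ℝ) < 2)]
      apply le_of_eq
      congr 1
      ring
    -- the union of all bad sets is small
    set BadAll : Finset (Fin Δ → Bool) := BadE ∪ (Finset.Ico K₁ Δ).biUnion BadI with hBadAlldef
    have hBadAll_lt : BadAll.card < 2 ^ Δ := by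
      have t1 : BadAll.card ≤ BadE.card + ∑ δ ∈ Finset.Ico K₁ Δ, (BadI δ).card := by
        refine le_trans (Finset.card_union_le _ _) ?_
        exact Nat.add_le_add_left (Finset.card_biUnion_le) _
      have t2 : (∑ δ ∈ Finset.Ico K₁ Δ, ((BadI δ).card : ℝ)) ≤ (2:ℝ) ^ ((Δ:ℝ) - 2) := by
        have t3 : (∑ δ ∈ Finset.Ico K₁ Δ, ((BadI δ).card : ℝ))
            ≤ ∑ δ ∈ Finset.Ico K₁ Δ, (2:ℝ) ^ ((Δ:ℝ) + (s1:ℝ)) * ((2:ℝ) ^ (-(7:ℝ)/8)) ^ δ := by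
          apply Finset.sum_le_sum
          intro δ hδ
          rw [Finset.mem_Ico] at hδ
          exact hBadI_count δ hδ.1 hδ.2
        rw [← Finset.mul_sum] at t3
        have t4 := geom_bound K₁ Δ
        have h2p : (0:ℝ) ≤ (2:ℝ) ^ ((Δ:ℝ) + (s1:ℝ)) := (Real.rpow_pos_of_pos (by norm_num) _).le
        have t5 : (∑ δ ∈ Finset.Ico K₁ Δ, ((BadI δ).card : ℝ))
            ≤ (2:ℝ) ^ ((Δ:ℝ) + (s1:ℝ)) * (4 * ((2:ℝ) ^ (-(7:ℝ)/8)) ^ K₁) :=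
          le_trans t3 (mul_le_mul_of_nonneg_left t4 h2p)
        refine le_trans t5 ?_
        have hrK : ((2:ℝ) ^ (-(7:ℝ)/8)) ^ K₁ = (2:ℝ) ^ ((-(7:ℝ)/8) * (K₁:ℝ)) := by
          rw [← Real.rpow_natCast ((2:ℝ) ^ (-(7:ℝ)/8)) K₁,
            ← Real.rpow_mul (by norm_num : (0:ℝ) ≤ 2)]
        have h4 : (4:ℝ) = (2:ℝ) ^ (2:ℝ) := by
          rw [show (2:ℝ) ^ (2:ℝ) = (2:ℝ) ^ ((2:ℕ):ℝ) by norm_num, Real.rpow_natCast]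
          norm_num
        rw [hrK, h4, ← Real.rpow_add (by norm_num : (0:ℝ) < 2),
          ← Real.rpow_add (by norm_num : (0:ℝ) < 2)]
        apply Real.rpow_le_rpow_of_exponent_le (by norm_num)
        have hcast : 2 * ((s1:ℝ) + 4) ≤ (K₁:ℝ) := by exact_mod_cast hK₁s
        linarith
      have t6 : (BadAll.card : ℝ) < (2:ℝ) ^ ((Δ:ℝ)) := by
        have t7 : (BadAll.card : ℝ) ≤ (BadE.card : ℝ) + ∑ δ ∈ Finset.Ico K₁ Δ, ((BadI δ).card : ℝ) := by
          have := t1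
          push_cast
          exact_mod_cast t1
        have t8 : (BadAll.card : ℝ) ≤ (2:ℝ) ^ ((Δ:ℝ) - 2) + (2:ℝ) ^ ((Δ:ℝ) - 2) := by
          linarith
        have t9 : (2:ℝ) ^ ((Δ:ℝ) - 2) + (2:ℝ) ^ ((Δ:ℝ) - 2) = (2:ℝ) ^ ((Δ:ℝ) - 1) := by
          have : (2:ℝ) ^ ((Δ:ℝ) - 1) = (2:ℝ) ^ ((Δ:ℝ) - 2) * (2:ℝ) ^ (1:ℝ) := by
            rw [← Real.rpow_add (by norm_num : (0:ℝ) < 2)]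
            congr 1
            ring
          rw [this, Real.rpow_one]
          ring
        have t10 : (2:ℝ) ^ ((Δ:ℝ) - 1) < (2:ℝ) ^ ((Δ:ℝ)) :=
          Real.rpow_lt_rpow_of_exponent_lt (by norm_num) (by linarith)
        linarith
      have huniv : ((2 ^ Δ : ℕ) : ℝ) = (2:ℝ) ^ ((Δ:ℕ):ℝ) := by
        rw [Real.rpow_natCast]
        push_cast
        ring
      rw [← huniv] at t6
      exact_mod_cast t6
    have hex : ∃ a : Fin Δ → Bool, a ∉ BadAll := by
      by_contra h
      push_neg at h
      have heq : BadAll = Finset.univ := Finset.eq_univ_iff_forall.mpr h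
      rw [heq] at hBadAll_lt
      have : (Finset.univ : Finset (Fin Δ → Bool)).card = 2 ^ Δ := by
        simp [Finset.card_univ]
      omega
    obtain ⟨a, ha⟩ := hex
    have hanotE : a ∉ BadE := fun h => ha (Finset.mem_union_left _ h)
    have hanotI : ∀ δ : ℕ, K₁ ≤ δ → δ < Δ → a ∉ BadI δ := by
      intro δ h1 h2 h
      exact ha (Finset.mem_union_right _
        (Finset.mem_biUnion.mpr ⟨δ, Finset.mem_Ico.mpr ⟨h1, h2⟩, h⟩))
    refine ⟨u ++ List.ofFn a, List.prefix_append u _, ?_, ?_, ?_⟩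
    · simp [hulen, hnfsucc j, hΔdef]
    · intro z hz
      have hE : ¬ ∃ z ∈ Z, (X.dist (φ (u ++ List.ofFn a)) z : ℝ) ≤ D' := by
        intro hcon
        apply hanotE
        rw [hBadEdef]
        simp only [Finset.mem_filter, Finset.mem_univ, true_and]
        exact hcon
      push_neg at hE
      have := hE z hz
      rw [hD'def] at this
      push_cast
      linarith
    · intro k hk
      have hwlen : (u ++ List.ofFn a).length = u.length + Δ := by simp
      rcases le_or_gt k u.length with hku | hku
      · rw [List.take_append_of_le_length hku]
        exact hugood k hku
      · have hδle : k - u.length ≤ Δ := by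
          rw [hwlen] at hk
          omega
        have hk_eq : k = u.length + (k - u.length) := by omega
        have htake : (u ++ List.ofFn a).take k = u ++ (List.ofFn a).take (k - u.length) := by
          have h10 := take_append_len u (List.ofFn a) (k - u.length)
          rw [← hk_eq] at h10
          exact h10
        have hpos : ∀ z ∈ Z, (0:ℝ) < (X.dist (φ ((u ++ List.ofFn a).take k)) z : ℝ) := by
          rcases eq_or_lt_of_le hδle with hδΔ | hδΔ
          · -- endpoint
            have hkw : k = (u ++ List.ofFn a).length := by omega
            rw [hkw, List.take_length]
            intro z hz
            have hE : ¬ ∃ z ∈ Z, (X.dist (φ (u ++ List.ofFn a)) z : ℝ) ≤ D' := by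
              intro hcon
              apply hanotE
              rw [hBadEdef]
              simp only [Finset.mem_filter, Finset.mem_univ, true_and]
              exact hcon
            push_neg at hE
            have h5 := hE z hz
            rw [hD'def] at h5
            linarith
          · rcases lt_or_ge (k - u.length) K₁ with hδK | hδK
            · -- safety zone
              intro z hz
              rw [htake]
              have htri : (X.dist (φ u) z : ℝ)
                  ≤ (X.dist (φ u) (φ (u ++ (List.ofFn a).take (k - u.length))) : ℝ)
                    + (X.dist (φ (u ++ (List.ofFn a).take (k - u.length))) z : ℝ) := by
                exact_mod_cast (hconn.dist_triangle
                  (u := φ u) (v := φ (u ++ (List.ofFn a).take (k - u.length))) (w := z))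
              have hup : (X.dist (φ u) (φ (u ++ (List.ofFn a).take (k - u.length))) : ℝ)
                  ≤ lam * ((k - u.length : ℕ):ℝ) + c := by
                have h := hφu u (u ++ (List.ofFn a).take (k - u.length))
                rwa [treeDist_append, List.length_take, List.length_ofFn,
                  min_eq_left hδle] at h
              have hlow := hudist z hz
              have hcast : ((k - u.length : ℕ):ℝ) ≤ (K₁:ℝ) - 1 := by
                have h7 : (k - u.length) + 1 ≤ K₁ := hδK
                have h8 : ((k - u.length : ℕ):ℝ) + 1 ≤ (K₁:ℝ) := by exact_mod_cast h7
                linarith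
              have hmul : lam * ((k - u.length : ℕ):ℝ) ≤ lam * ((K₁:ℝ) - 1) :=
                mul_le_mul_of_nonneg_left hcast (by linarith)
              rw [hQdef] at hlow
              linarith
            · -- counting zone
              have hnot := hanotI (k - u.length) hδK hδΔ
              have hI : ¬ ∃ z ∈ Z,
                  (X.dist (φ (u ++ (List.ofFn a).take (k - u.length))) z : ℝ) ≤ 1 := by
                intro hcon
                apply hnot
                rw [hBadIdef]
                simp only [Finset.mem_filter, Finset.mem_univ, true_and]
                exact hcon
              push_neg at hI
              intro z hz
              rw [htake]
              have := hI z hz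
              linarith
        intro hmem
        have h9 := hpos _ hmem
        rw [SimpleGraph.dist_self] at h9
        simp at h9
  -- build the sequence
  have base : ([] : List Bool).length = nf 0 ∧
      (∀ z ∈ Z, Q + ((0:ℕ):ℝ) ≤ (X.dist (φ ([] : List Bool)) z : ℝ)) ∧
      (∀ k, k ≤ ([] : List Bool).length → φ (([] : List Bool).take k) ∉ Z) := by
    refine ⟨by simp [hnf0], ?_, ?_⟩
    · intro z hz
      simpa using hroot z hz
    · intro k hk
      simp only [List.length_nil, Nat.le_zero] at hk
      subst hk
      rw [List.take_nil]
      intro hmem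
      have := hroot _ hmem
      rw [SimpleGraph.dist_self] at this
      simp at this
      linarith
  obtain ⟨U, hU0, hUP, hUpre⟩ : ∃ U : ℕ → List Bool, U 0 = [] ∧
      (∀ j, (U j).length = nf j ∧
        (∀ z ∈ Z, Q + (j:ℝ) ≤ (X.dist (φ (U j)) z : ℝ)) ∧
        (∀ k, k ≤ (U j).length → φ ((U j).take k) ∉ Z)) ∧
      (∀ j, U j <+: U (j+1)) := by
    have F : ∀ (j : ℕ) (u : List Bool),
        (u.length = nf j ∧ (∀ z ∈ Z, Q + (j:ℝ) ≤ (X.dist (φ u) z : ℝ)) ∧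
          (∀ k, k ≤ u.length → φ (u.take k) ∉ Z)) →
        {w : List Bool // u <+: w ∧ w.length = nf (j+1) ∧
          (∀ z ∈ Z, Q + ((j+1:ℕ):ℝ) ≤ (X.dist (φ w) z : ℝ)) ∧
          (∀ k, k ≤ w.length → φ (w.take k) ∉ Z)} := by
      intro j u hu
      exact ⟨(key j u hu.1 hu.2.1 hu.2.2).choose, (key j u hu.1 hu.2.1 hu.2.2).choose_spec⟩
    let seq : ∀ j : ℕ, {u : List Bool // u.length = nf j ∧
        (∀ z ∈ Z, Q + (j:ℝ) ≤ (X.dist (φ u) z : ℝ)) ∧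
        (∀ k, k ≤ u.length → φ (u.take k) ∉ Z)} :=
      fun j => Nat.rec ⟨[], base⟩
        (fun j p => ⟨(F j p.1 p.2).1, (F j p.1 p.2).2.2.1,
          by exact_mod_cast (F j p.1 p.2).2.2.2.1, (F j p.1 p.2).2.2.2.2⟩) j
    exact ⟨fun j => (seq j).1, rfl, fun j => (seq j).2,
      fun j => (F j (seq j).1 (seq j).2).2.1⟩
  have hchain : ∀ j k, j ≤ k → U j <+: U k := by
    intro j k hjk
    induction k with
    | zero =>
      have : j = 0 := Nat.le_zero.mp hjk
      subst this
      exact List.prefix_refl _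
    | succ k ih =>
      rcases Nat.lt_or_ge j (k+1) with h | h
      · exact (ih (by omega)).trans (hUpre k)
      · have : j = k + 1 := by omega
        subst this
        exact List.prefix_refl _
  have hUlen : ∀ j, (U j).length = nf j := fun j => (hUP j).1
  -- define the ray
  set f : ℕ → Bool := fun i => (U (i+1)).getD i false with hfdef
  have hofFn : ∀ (jj n' : ℕ), n' ≤ nf jj →
      (List.ofFn fun i : Fin n' => f i) = (U jj).take n' := by
    intro jj n' hn'
    apply List.ext_getElem
    · simp [hUlen jj]
      omega
    · intro i h1 h2
      simp only [List.getElem_ofFn, List.getElem_take]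
      have hi : i < n' := by simpa using h1
      have hilen : i < (U (i+1)).length := by
        rw [hUlen]
        have := hnfge (i+1)
        omega
      rw [hfdef]
      simp only
      rw [List.getD_eq_getElem _ _ hilen]
      have hiU : i < (U jj).length := by
        rw [hUlen]; omega
      rcases le_total (i+1) jj with h | h
      · exact (hchain (i+1) jj h).getElem hilen
      · exact ((hchain jj (i+1) h).getElem hiU).symm
  refine ⟨f, ?_, ?_⟩
  · intro n
    rw [hofFn n n (hnfge n)]
    exact (hUP n).2.2 n (by rw [hUlen]; exact hnfge n)
  · intro M
    refine ⟨nf ⌈M⌉₊, ?_⟩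
    intro z hz
    rw [hofFn ⌈M⌉₊ (nf ⌈M⌉₊) le_rfl]
    rw [← hUlen ⌈M⌉₊, List.take_length]
    have h1 := (hUP ⌈M⌉₊).2.1 z hz
    have h2 : M ≤ (⌈M⌉₊ : ℝ) := Nat.le_ceil M
    linarith
end

section
/- Let G be a finite unpinched graph and let Q be a set of vertices of G such that the subgraph of G induced by Q is unpinched. If Q separates G, then for every connected component C of the subgraph induced by V(G) ∖ Q, the subgraph of G induced by C ∪ Q is unpinched. In particular, G then satisfies: there exist a set K of vertices and a partition of V(G) ∖ K into p ≥ 2 nonempty parts G₁, …, G_p such that K separates G, no edge joins distinct parts, and each subgraph induced by Gᵢ ∪ K is unpinched. -/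
/-- A set `K` of vertices separates the graph `G` if two vertices outside `K` cannot be
joined within the subgraph induced on the complement of `K`. -/
def Separates {V : Type*} (G : SimpleGraph V) (K : Set V) : Prop :=
  ∃ x y : (Kᶜ : Set V), ¬ (G.induce (Kᶜ : Set V)).Reachable x y

/-- A graph is unpinched if it is not complete and no clique separates it. -/
def Unpinched {V : Type*} (G : SimpleGraph V) : Prop :=
  (¬ ∀ u v : V, u ≠ v → G.Adj u v) ∧ ∀ K : Set V, G.IsClique K → ¬ Separates G K

open SimpleGraph

private lemma walk_step {V : Type*} (G : SimpleGraph V) (Q A K' : Set V)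
    (hAQ : A ⊆ Qᶜ)
    (hclosed : ∀ a ∈ A, ∀ b ∈ (Qᶜ : Set V), G.Adj a b → b ∈ A)
    {v q : (K'ᶜ : Set V)} (p : (G.induce (K'ᶜ : Set V)).Walk v q)
    (hq : q.1 ∈ Q) :
    v.1 ∈ A →
    ∃ w : ((A ∪ Q) \ K' : Set V), w.1 ∈ Q ∧
      ∀ (hv' : v.1 ∈ ((A ∪ Q) \ K' : Set V)),
        (G.induce ((A ∪ Q) \ K' : Set V)).Reachable ⟨v.1, hv'⟩ w := by
  induction p with
  | nil =>
    intro hv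
    exact absurd hq (hAQ hv)
  | @cons v u q h p ih =>
    intro hv
    have hadj : G.Adj v.1 u.1 := h
    by_cases hu : u.1 ∈ Q
    · refine ⟨⟨u.1, ⟨Or.inr hu, u.2⟩⟩, hu, fun hv' => ?_⟩
      exact Adj.reachable (by exact hadj)
    · have huA : u.1 ∈ A := hclosed v.1 hv u.1 hu hadj
      obtain ⟨w, hwQ, hr⟩ := ih hq huA
      refine ⟨w, hwQ, fun hv' => ?_⟩
      have : (G.induce ((A ∪ Q) \ K' : Set V)).Adj ⟨v.1, hv'⟩ ⟨u.1, ⟨Or.inl huA, u.2⟩⟩ := hadj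
      exact this.reachable.trans (hr _)

private lemma key {V : Type*} (G : SimpleGraph V) (hG : Unpinched G)
    (Q : Set V) (hQ : Unpinched (G.induce Q)) (A : Set V)
    (hAQ : A ⊆ Qᶜ)
    (hclosed : ∀ a ∈ A, ∀ b ∈ (Qᶜ : Set V), G.Adj a b → b ∈ A) :
    Unpinched (G.induce (A ∪ Q)) := by
  obtain ⟨hQnc, hQns⟩ := hQ
  push_neg at hQnc
  obtain ⟨u₀, v₀, hne₀, hnadj₀⟩ := hQnc
  constructor
  · -- not complete
    intro h
    refine hnadj₀ ?_
    have : (G.induce (A ∪ Q)).Adj ⟨u₀.1, Or.inr u₀.2⟩ ⟨v₀.1, Or.inr v₀.2⟩ :=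
      h _ _ (fun e => hne₀ (Subtype.ext (congrArg (fun z : (A ∪ Q : Set V) => z.1) e)))
    exact this
  · -- no clique separates
    rintro K hK ⟨x, y, hxy⟩
    set K' : Set V := Subtype.val '' K with hK'def
    have hK' : G.IsClique K' := by
      rintro a ⟨a', ha', rfl⟩ b ⟨b', hb', rfl⟩ hab
      have : a' ≠ b' := fun e => hab (congrArg Subtype.val e)
      exact hK ha' hb' this
    -- a vertex of Q outside K'
    have hqex : ∃ q₀ : V, q₀ ∈ Q ∧ q₀ ∉ K' := by
      by_contra hcon
      push_neg at hcon
      have h1 : (u₀ : V) ∈ K' := hcon _ u₀.2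
      have h2 : (v₀ : V) ∈ K' := hcon _ v₀.2
      have : G.Adj u₀.1 v₀.1 := hK' h1 h2 (fun e => hne₀ (Subtype.ext e))
      exact hnadj₀ this
    obtain ⟨q₀, hq₀Q, hq₀K⟩ := hqex
    -- reachability within Q \ K' transfers
    have QReach : ∀ (a b : ((A ∪ Q) \ K' : Set V)), a.1 ∈ Q → b.1 ∈ Q →
        (G.induce ((A ∪ Q) \ K' : Set V)).Reachable a b := by
      intro a b haQ hbQ
      set KQ : Set Q := {z | z.1 ∈ K'} with hKQdef
      have hKQ : (G.induce Q).IsClique KQ := by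
        intro c hc d hd hcd
        exact hK' hc hd (fun e => hcd (Subtype.ext e))
      have := hQns KQ hKQ
      rw [Separates] at this
      push_neg at this
      have hra : (a : V) ∉ K' := a.2.2
      have hrb : (b : V) ∉ K' := b.2.2
      have hr := this ⟨⟨a.1, haQ⟩, hra⟩ ⟨⟨b.1, hbQ⟩, hrb⟩
      -- map into the big induced graph
      let f : ((G.induce Q).induce (KQᶜ : Set Q)) →g (G.induce ((A ∪ Q) \ K' : Set V)) :=
        ⟨fun z => ⟨z.1.1, ⟨Or.inr z.1.2, z.2⟩⟩, fun {c d} hcd => hcd⟩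
      have := hr.map f
      exact this
    -- every vertex reaches some vertex of Q \ K'
    have toQ : ∀ (z : ((A ∪ Q) \ K' : Set V)),
        ∃ w : ((A ∪ Q) \ K' : Set V), w.1 ∈ Q ∧
          (G.induce ((A ∪ Q) \ K' : Set V)).Reachable z w := by
      intro z
      by_cases hzQ : z.1 ∈ Q
      · exact ⟨z, hzQ, Reachable.refl _⟩
      · have hzA : z.1 ∈ A := z.2.1.resolve_right hzQ
        have hGns := hG.2 K' hK'
        rw [Separates] at hGns
        push_neg at hGns
        have hr := hGns ⟨z.1, z.2.2⟩ ⟨q₀, hq₀K⟩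
        obtain ⟨p⟩ := hr
        obtain ⟨w, hwQ, hreach⟩ := walk_step G Q A K' hAQ hclosed p hq₀Q hzA
        exact ⟨w, hwQ, by simpa using hreach z.2⟩
    -- hence the induced graph minus K is connected; contradiction
    have hxm : (x.1 : V) ∈ ((A ∪ Q) \ K' : Set V) := by
      refine ⟨x.1.2, fun hmem => ?_⟩
      obtain ⟨k, hk, hval⟩ := hmem
      exact x.2 (by rwa [Subtype.ext hval] at hk)
    have hym : (y.1 : V) ∈ ((A ∪ Q) \ K' : Set V) := by
      refine ⟨y.1.2, fun hmem => ?_⟩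
      obtain ⟨k, hk, hval⟩ := hmem
      exact y.2 (by rwa [Subtype.ext hval] at hk)
    obtain ⟨wx, hwxQ, hrx⟩ := toQ ⟨x.1.1, hxm⟩
    obtain ⟨wy, hwyQ, hry⟩ := toQ ⟨y.1.1, hym⟩
    have hmid : (G.induce ((A ∪ Q) \ K' : Set V)).Reachable wx wy := QReach wx wy hwxQ hwyQ
    have hbig : (G.induce ((A ∪ Q) \ K' : Set V)).Reachable ⟨x.1.1, hxm⟩ ⟨y.1.1, hym⟩ :=
      (hrx.trans hmid).trans hry.symm
    -- map back into the doubly-induced graph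
    let g : (G.induce ((A ∪ Q) \ K' : Set V)) →g ((G.induce (A ∪ Q)).induce (Kᶜ : Set (A ∪ Q : Set V))) :=
      ⟨fun z => ⟨⟨z.1, z.2.1⟩, fun hk => z.2.2 ⟨⟨z.1, z.2.1⟩, hk, rfl⟩⟩, fun {c d} hcd => hcd⟩
    have := hbig.map g
    have hx' : g ⟨x.1.1, hxm⟩ = x := Subtype.ext (Subtype.ext rfl)
    have hy' : g ⟨y.1.1, hym⟩ = y := Subtype.ext (Subtype.ext rfl)
    rw [hx', hy'] at this
    exact hxy this

/-- If a finite unpinched graph `G` is separated by a set `Q` inducing an unpinched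
subgraph, then for every connected component `C` of the complement of `Q` the subgraph
induced by `C ∪ Q` is unpinched; in particular, `G` is separated by a set `K` with a
partition of the complement into at least two pieces, each piece plus `K` being unpinched
and with no edges between distinct pieces. -/
theorem separating_unpinched_subgraph {V : Type*} [Fintype V] (G : SimpleGraph V)
    (hG : Unpinched G) (Q : Set V) (hQ : Unpinched (G.induce Q))
    (hsep : Separates G Q) :
    (∀ c : (G.induce (Qᶜ : Set V)).ConnectedComponent,
      Unpinched (G.induce ((Subtype.val '' c.supp) ∪ Q))) ∧
    (∃ (K : Set V) (p : ℕ) (P : Fin p → Set V),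
      2 ≤ p ∧ Separates G K ∧
      (∀ i, (P i).Nonempty) ∧
      (∀ i j, i ≠ j → Disjoint (P i) (P j)) ∧
      (⋃ i, P i) = (Kᶜ : Set V) ∧
      (∀ i j, i ≠ j → ∀ x ∈ P i, ∀ y ∈ P j, ¬ G.Adj x y) ∧
      (∀ i, Unpinched (G.induce (P i ∪ K)))) := by
  have compClosed : ∀ (c : (G.induce (Qᶜ : Set V)).ConnectedComponent),
      ∀ a ∈ (Subtype.val '' c.supp), ∀ b ∈ (Qᶜ : Set V), G.Adj a b →
        b ∈ (Subtype.val '' c.supp) := by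
    rintro c a ⟨a', ha', rfl⟩ b hb hab
    refine ⟨⟨b, hb⟩, ?_, rfl⟩
    rw [ConnectedComponent.mem_supp_iff] at ha' ⊢
    rw [← ha']
    have : (G.induce (Qᶜ : Set V)).Adj ⟨b, hb⟩ a' := hab.symm
    exact ConnectedComponent.sound this.reachable
  have compSub : ∀ (c : (G.induce (Qᶜ : Set V)).ConnectedComponent),
      (Subtype.val '' c.supp) ⊆ Qᶜ := by
    rintro c a ⟨a', _, rfl⟩
    exact a'.2
  refine ⟨fun c => key G hG Q hQ _ (compSub c) (compClosed c), ?_⟩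
  obtain ⟨x, y, hxy⟩ := hsep
  set c := (G.induce (Qᶜ : Set V)).connectedComponentMk x with hc
  set A0 : Set V := Subtype.val '' c.supp with hA0
  have hA0sub : A0 ⊆ Qᶜ := compSub c
  have hyA0 : (y : V) ∉ A0 := by
    rintro ⟨y', hy', hval⟩
    rw [ConnectedComponent.mem_supp_iff] at hy'
    have : y' = y := Subtype.ext hval
    rw [this] at hy'
    exact hxy (ConnectedComponent.exact hy').symm
  refine ⟨Q, 2, ![A0, Qᶜ \ A0], le_refl 2, ⟨x, y, hxy⟩, ?_, ?_, ?_, ?_, ?_⟩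
  · intro i
    fin_cases i
    · exact ⟨x.1, ⟨x, by rw [ConnectedComponent.mem_supp_iff], rfl⟩⟩
    · exact ⟨y.1, y.2, hyA0⟩
  · intro i j hij
    have hd : Disjoint A0 (Qᶜ \ A0) := Set.disjoint_sdiff_right
    fin_cases i <;> fin_cases j
    · exact absurd rfl hij
    · exact hd
    · exact hd.symm
    · exact absurd rfl hij
  · ext z
    simp only [Set.mem_iUnion]
    constructor
    · rintro ⟨i, hi⟩
      fin_cases i
      · exact hA0sub hi
      · exact hi.1
    · intro hz
      by_cases hzA : z ∈ A0
      · exact ⟨0, hzA⟩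
      · exact ⟨1, hz, hzA⟩
  · intro i j hij a ha b hb hab
    have core : ∀ a ∈ A0, ∀ b ∈ Qᶜ \ A0, ¬ G.Adj a b := by
      intro a ha b hb hab
      exact hb.2 (compClosed c a ha b hb.1 hab)
    fin_cases i <;> fin_cases j
    · exact absurd rfl hij
    · exact core a ha b hb hab
    · exact core b hb a ha hab.symm
    · exact absurd rfl hij
  · intro i
    fin_cases i
    · exact key G hG Q hQ A0 hA0sub (compClosed c)
    · refine key G hG Q hQ (Qᶜ \ A0) Set.diff_subset ?_
      intro a ha b hb hab
      refine ⟨hb, fun hbA => ?_⟩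
      exact ha.2 (compClosed c b hbA a ha.1 hab.symm)
end

section
/- Let Γ be a finite simple graph and let G be a set of vertices of Γ such that the subgraph of Γ induced by G is unpinched. Let v₀, v₁, …, v_m be an induced path in Γ (so m ≥ 2) whose endpoints v₀ and v_m belong to G and are non-adjacent in Γ, and whose interior vertices v₁, …, v_{m−1} do not belong to G. Then the subgraph of Γ induced by G ∪ {v₀, v₁, …, v_m} is unpinched. -/
/-- Adding an induced path with non-adjacent endpoints in `G` and interior outside `G` to
an induced unpinched subgraph `G` of `Γ` yields an induced unpinched subgraph. -/
theorem adding_path_to_unpinched {V : Type*} [Fintype V] (Γ : SimpleGraph V)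
    (G : Set V) (hG : Unpinched (Γ.induce G))
    (m : ℕ) (hm : 2 ≤ m) (v : Fin (m + 1) → V) (hinj : Function.Injective v)
    (hpath : ∀ i j : Fin (m + 1), Γ.Adj (v i) (v j) ↔ ((i : ℕ) + 1 = j ∨ (j : ℕ) + 1 = i))
    (h0 : v 0 ∈ G) (hlast : v (Fin.last m) ∈ G)
    (hends : ¬ Γ.Adj (v 0) (v (Fin.last m)))
    (hint : ∀ i : Fin (m + 1), i ≠ 0 → i ≠ Fin.last m → v i ∉ G) :
    Unpinched (Γ.induce (G ∪ Set.range v)) := by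
  set S : Set V := G ∪ Set.range v with hS
  have hvS : ∀ i, v i ∈ S := fun i => Or.inr ⟨i, rfl⟩
  set pv : Fin (m + 1) → (S : Set V) := fun i => ⟨v i, hvS i⟩ with hpv
  constructor
  · intro hcomp
    have h1 : (⟨v 0, hvS 0⟩ : S) ≠ ⟨v (Fin.last m), hvS _⟩ := by
      intro h
      have hv0 : v 0 = v (Fin.last m) := congrArg Subtype.val h
      have : (0 : Fin (m + 1)) = Fin.last m := hinj hv0
      have : (0 : ℕ) = m := congrArg Fin.val this
      omega
    exact hends (hcomp ⟨v 0, hvS 0⟩ ⟨v (Fin.last m), hvS _⟩ h1)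
  · intro K hK hsep
    rw [SimpleGraph.isClique_iff] at hK
    obtain ⟨x, y, hxy⟩ := hsep
    apply hxy; clear hxy
    -- basic step: adjacency in Γ gives reachability in the doubly-induced graph
    have step : ∀ a b : ((Kᶜ : Set S) : Set S),
        Γ.Adj a.1.1 b.1.1 → ((Γ.induce S).induce (Kᶜ : Set S)).Reachable a b :=
      fun a b h => SimpleGraph.Adj.reachable h
    -- the trace of K on G is a clique of the induced graph on G
    set K_G : Set G := {a : G | (⟨a.1, Or.inl a.2⟩ : S) ∈ K} with hK_G
    have hKGclique : (Γ.induce G).IsClique K_G := by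
      rw [SimpleGraph.isClique_iff]
      intro a ha b hb hab
      have hne : (⟨a.1, Or.inl a.2⟩ : S) ≠ ⟨b.1, Or.inl b.2⟩ := by
        intro h
        have hv := Subtype.ext_iff.mp h
        exact hab (Subtype.ext hv)
      exact hK ha hb hne
    have hGall : ∀ x y : ((K_Gᶜ : Set G) : Set G),
        ((Γ.induce G).induce (K_Gᶜ : Set G)).Reachable x y := by
      intro x y
      by_contra h
      exact hG.2 K_G hKGclique ⟨x, y, h⟩
    -- homomorphism transporting reachability from G-side to S-side
    let f : ((Γ.induce G).induce (K_Gᶜ : Set G)) →g ((Γ.induce S).induce (Kᶜ : Set S)) :=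
      ⟨fun a => ⟨⟨a.1.1, Or.inl a.1.2⟩, a.2⟩, fun h => h⟩
    have Greach : ∀ (x y : ((Kᶜ : Set S) : Set S)), x.1.1 ∈ G → y.1.1 ∈ G →
        ((Γ.induce S).induce (Kᶜ : Set S)).Reachable x y := by
      intro x y hx hy
      have hx' : (⟨x.1.1, hx⟩ : G) ∉ K_G := by
        intro h
        have : (⟨x.1.1, Or.inl hx⟩ : S) = x.1 := Subtype.ext rfl
        exact x.2 (this ▸ h)
      have hy' : (⟨y.1.1, hy⟩ : G) ∉ K_G := by
        intro h
        have : (⟨y.1.1, Or.inl hy⟩ : S) = y.1 := Subtype.ext rfl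
        exact y.2 (this ▸ h)
      have hr := (hGall ⟨⟨x.1.1, hx⟩, hx'⟩ ⟨⟨y.1.1, hy⟩, hy'⟩).map f
      have e1 : f ⟨⟨x.1.1, hx⟩, hx'⟩ = x := Subtype.ext (Subtype.ext rfl)
      have e2 : f ⟨⟨y.1.1, hy⟩, hy'⟩ = y := Subtype.ext (Subtype.ext rfl)
      rwa [e1, e2] at hr
    -- the path indices meeting K are within distance one of each other
    have hB : ∀ i j : Fin (m + 1), pv i ∈ K → pv j ∈ K → (i : ℕ) ≤ j → (j : ℕ) ≤ i + 1 := by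
      intro i j hi hj hij
      by_cases hij' : i = j
      · subst hij'; omega
      · have hne : pv i ≠ pv j := by
          intro h
          exact hij' (hinj (congrArg Subtype.val h))
        have hadj : Γ.Adj (v i) (v j) := hK hi hj hne
        rw [hpath] at hadj
        have : (i : ℕ) ≠ j := fun h => hij' (Fin.ext h)
        omega
    -- walking left along the path
    have walkL : ∀ n : ℕ, ∀ i : Fin (m + 1), (i : ℕ) = n →
        (∀ j : Fin (m + 1), (j : ℕ) ≤ (i : ℕ) → pv j ∉ K) →
        ∀ (hi : pv i ∉ K) (h0' : pv 0 ∉ K),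
        ((Γ.induce S).induce (Kᶜ : Set S)).Reachable ⟨pv i, hi⟩ ⟨pv 0, h0'⟩ := by
      intro n
      induction n with
      | zero =>
        intro i hi _ hiK h0'
        have : i = 0 := Fin.ext (by simpa using hi)
        subst this
        exact SimpleGraph.Reachable.refl _
      | succ n ih =>
        intro i hi hgood hiK h0'
        have hlt : n < m + 1 := by omega
        set i' : Fin (m + 1) := ⟨n, hlt⟩ with hi'
        have hadj : Γ.Adj (v i) (v i') := by
          rw [hpath]; right; simp [hi', hi]
        have hi'K : pv i' ∉ K := hgood i' (by simp [hi', hi])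
        have hgood' : ∀ j : Fin (m + 1), (j : ℕ) ≤ (i' : ℕ) → pv j ∉ K := by
          intro j hj
          exact hgood j (by simp [hi', hi] at hj ⊢; omega)
        exact (step ⟨pv i, hiK⟩ ⟨pv i', hi'K⟩ hadj).trans (ih i' rfl hgood' hi'K h0')
    -- walking right along the path
    have walkR : ∀ n : ℕ, ∀ i : Fin (m + 1), (i : ℕ) + n = m →
        (∀ j : Fin (m + 1), (i : ℕ) ≤ (j : ℕ) → pv j ∉ K) →
        ∀ (hi : pv i ∉ K) (hl' : pv (Fin.last m) ∉ K),
        ((Γ.induce S).induce (Kᶜ : Set S)).Reachable ⟨pv i, hi⟩ ⟨pv (Fin.last m), hl'⟩ := by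
      intro n
      induction n with
      | zero =>
        intro i hi _ hiK hl'
        have : i = Fin.last m := Fin.ext (by simpa [Fin.last] using hi)
        subst this
        exact SimpleGraph.Reachable.refl _
      | succ n ih =>
        intro i hi hgood hiK hl'
        have hlt : (i : ℕ) + 1 < m + 1 := by omega
        set i' : Fin (m + 1) := ⟨(i : ℕ) + 1, hlt⟩ with hi'
        have hadj : Γ.Adj (v i) (v i') := by
          rw [hpath]; left; simp [hi']
        have hi'K : pv i' ∉ K := hgood i' (by simp [hi'])
        have hgood' : ∀ j : Fin (m + 1), (i' : ℕ) ≤ (j : ℕ) → pv j ∉ K := by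
          intro j hj
          exact hgood j (by simp [hi'] at hj; omega)
        have hval : (i' : ℕ) + n = m := by simp [hi']; omega
        exact (step ⟨pv i, hiK⟩ ⟨pv i', hi'K⟩ hadj).trans (ih i' hval hgood' hi'K hl')
    -- an anchor vertex of G outside K
    have hanchor : ∃ a : ((Kᶜ : Set S) : Set S), a.1.1 ∈ G := by
      have h1 := hG.1
      push_neg at h1
      obtain ⟨u, w, huw, hnadj⟩ := h1
      by_cases hu : (⟨u.1, Or.inl u.2⟩ : S) ∈ K
      · by_cases hw : (⟨w.1, Or.inl w.2⟩ : S) ∈ K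
        · exfalso
          apply hnadj
          have hne : (⟨u.1, Or.inl u.2⟩ : S) ≠ ⟨w.1, Or.inl w.2⟩ := by
            intro h
            have hv := Subtype.ext_iff.mp h
            exact huw (Subtype.ext hv)
          exact hK hu hw hne
        · exact ⟨⟨⟨w.1, Or.inl w.2⟩, hw⟩, w.2⟩
      · exact ⟨⟨⟨u.1, Or.inl u.2⟩, hu⟩, u.2⟩
    obtain ⟨a₀, ha₀⟩ := hanchor
    -- every vertex outside K reaches the anchor
    have main : ∀ x : ((Kᶜ : Set S) : Set S),
        ((Γ.induce S).induce (Kᶜ : Set S)).Reachable x a₀ := by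
      intro x
      rcases x.1.2 with hxG | ⟨i, hvi⟩
      · exact Greach x a₀ hxG ha₀
      · by_cases hiG : v i ∈ G
        · exact Greach x a₀ (hvi ▸ hiG) ha₀
        · have hi0 : i ≠ 0 := fun h => hiG (h ▸ h0)
          have hil : i ≠ Fin.last m := fun h => hiG (h ▸ hlast)
          have hxpv : x.1 = pv i := Subtype.ext hvi.symm
          have hiK : pv i ∉ K := hxpv ▸ x.2
          have hxeq : x = ⟨pv i, hiK⟩ := Subtype.ext hxpv
          -- dichotomy on which side of i the set K meets the path
          by_cases hleft : ∀ j : Fin (m + 1), pv j ∈ K → (i : ℕ) < (j : ℕ)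
          · -- walk left to v 0
            have hgood : ∀ j : Fin (m + 1), (j : ℕ) ≤ (i : ℕ) → pv j ∉ K := by
              intro j hj hjK
              exact absurd hj (by have := hleft j hjK; omega)
            have h0K : pv 0 ∉ K := hgood 0 (by simp)
            have hw := walkL (i : ℕ) i rfl hgood hiK h0K
            have hg : ((Γ.induce S).induce (Kᶜ : Set S)).Reachable ⟨pv 0, h0K⟩ a₀ :=
              Greach ⟨pv 0, h0K⟩ a₀ h0 ha₀
            rw [hxeq]
            exact hw.trans hg
          · -- some element of K on the path is left of i; walk right to v m
            push_neg at hleft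
            obtain ⟨j₀, hj₀K, hj₀⟩ := hleft
            have hj₀lt : (j₀ : ℕ) < (i : ℕ) := by
              rcases lt_or_eq_of_le hj₀ with h | h
              · exact h
              · exact absurd (Fin.ext h : j₀ = i) (fun he => hiK (he ▸ hj₀K))
            have hgood : ∀ j : Fin (m + 1), (i : ℕ) ≤ (j : ℕ) → pv j ∉ K := by
              intro j hj hjK
              have hji : (j : ℕ) ≠ (i : ℕ) := fun h => hiK ((Fin.ext h : j = i) ▸ hjK)
              have := hB j₀ j hj₀K hjK (by omega)
              omega
            have hlK : pv (Fin.last m) ∉ K := hgood (Fin.last m) (by simp [Fin.last]; omega)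
            have hw := walkR (m - (i : ℕ)) i (by omega) hgood hiK hlK
            have hg : ((Γ.induce S).induce (Kᶜ : Set S)).Reachable ⟨pv (Fin.last m), hlK⟩ a₀ :=
              Greach ⟨pv (Fin.last m), hlK⟩ a₀ hlast ha₀
            rw [hxeq]
            exact hw.trans hg
    exact (main x).trans (main y).symm
end

section
/- Let Γ be a finite simple graph and let G be a set of vertices of Γ such that the subgraph of Γ induced by G is unpinched. Let v be a vertex of Γ not in G such that the set N(v) ∩ G of neighbours of v lying in G is not a clique, i.e., there exist two distinct non-adjacent vertices of G both adjacent to v. Then the subgraph of Γ induced by G ∪ {v} is unpinched. -/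
/-- Adding a vertex `v ∉ G` whose neighbourhood in `G` is not a clique to an induced
unpinched subgraph `G` of `Γ` yields an induced unpinched subgraph. -/
theorem adding_vertex_to_unpinched {V : Type*} [Fintype V] (Γ : SimpleGraph V)
    (G : Set V) (hG : Unpinched (Γ.induce G)) (v : V) (hv : v ∉ G)
    (hN : ∃ a ∈ G, ∃ b ∈ G, a ≠ b ∧ Γ.Adj v a ∧ Γ.Adj v b ∧ ¬ Γ.Adj a b) :
    Unpinched (Γ.induce (insert v G)) := by
  obtain ⟨a, haG, b, hbG, hab, hva, hvb, hnab⟩ := hN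
  constructor
  · intro h
    exact hnab (h ⟨a, Set.mem_insert_of_mem _ haG⟩ ⟨b, Set.mem_insert_of_mem _ hbG⟩
      (fun he => hab (congrArg Subtype.val he)))
  · rintro K hK ⟨x, y, hxy⟩
    apply hxy
    -- the trace of K on G
    set K₀ : Set ↑G := {p : ↑G | (⟨p.1, Set.mem_insert_of_mem _ p.2⟩ : ↑(insert v G)) ∈ K}
      with hK₀def
    have hK₀ : (Γ.induce G).IsClique K₀ := by
      intro p hp q hq hpq
      have hne : p.1 ≠ q.1 := fun h => hpq (Subtype.ext h)
      exact hK hp hq (by simpa [Subtype.ext_iff] using hne)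
    have hreach : ∀ p q : ↑(K₀ᶜ : Set ↑G),
        ((Γ.induce G).induce (K₀ᶜ : Set ↑G)).Reachable p q := by
      have h2 := hG.2 K₀ hK₀
      unfold Separates at h2
      push_neg at h2
      exact h2
    let F : ((Γ.induce G).induce (K₀ᶜ : Set ↑G)) →g
        ((Γ.induce (insert v G)).induce (Kᶜ : Set ↑(insert v G))) :=
      ⟨fun p => ⟨⟨p.1.1, Set.mem_insert_of_mem _ p.1.2⟩, p.2⟩, fun h => h⟩
    -- lift vertices of Kᶜ whose underlying vertex lies in G
    have lift : ∀ (z : ↑(Kᶜ : Set ↑(insert v G))) (hzG : (z.1 : V) ∈ G),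
        (⟨z.1.1, hzG⟩ : ↑G) ∈ (K₀ᶜ : Set ↑G) := by
      intro z hzG hmem
      apply z.2
      have hmem' : (⟨z.1.1, Set.mem_insert_of_mem _ hzG⟩ : ↑(insert v G)) ∈ K := hmem
      have he : z.1 = (⟨z.1.1, Set.mem_insert_of_mem _ hzG⟩ : ↑(insert v G)) := Subtype.ext rfl
      rw [he]; exact hmem'
    -- find a neighbour c of v, lying in G, outside K
    obtain ⟨c, hcG, hvc, hcK⟩ : ∃ c : V, ∃ hc : c ∈ G, Γ.Adj v c ∧
        (⟨c, Set.mem_insert_of_mem _ hc⟩ : ↑(insert v G)) ∉ K := by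
      by_cases ha : (⟨a, Set.mem_insert_of_mem _ haG⟩ : ↑(insert v G)) ∈ K
      · refine ⟨b, hbG, hvb, fun hb => ?_⟩
        have hne : (⟨a, Set.mem_insert_of_mem _ haG⟩ : ↑(insert v G)) ≠
            ⟨b, Set.mem_insert_of_mem _ hbG⟩ := fun he => hab (congrArg Subtype.val he)
        exact hnab (hK ha hb hne)
      · exact ⟨a, haG, hva, ha⟩
    set t : ↑(Kᶜ : Set ↑(insert v G)) := ⟨⟨c, Set.mem_insert_of_mem _ hcG⟩, hcK⟩ with ht
    have key : ∀ z : ↑(Kᶜ : Set ↑(insert v G)),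
        ((Γ.induce (insert v G)).induce (Kᶜ : Set ↑(insert v G))).Reachable z t := by
      intro z
      rcases Set.mem_insert_iff.mp z.1.2 with hzv | hzG
      · refine SimpleGraph.Adj.reachable ?_
        show Γ.Adj z.1.1 c
        rw [hzv]; exact hvc
      · have hr := (hreach ⟨⟨z.1.1, hzG⟩, lift z hzG⟩ ⟨⟨c, hcG⟩, lift t hcG⟩).map F
        have h1 : F ⟨⟨z.1.1, hzG⟩, lift z hzG⟩ = z := Subtype.ext (Subtype.ext rfl)
        have h2 : F ⟨⟨c, hcG⟩, lift t hcG⟩ = t := Subtype.ext (Subtype.ext rfl)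
        rwa [h1, h2] at hr
    exact (key x).trans (key y).symm
end
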